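/- In the calculus L_lcc, applicative similarity, Q_lcc-similarity and the inductive Q_lcc-preorder all coincide on closed expressions: ≼_lcc = ≼_{lcc,Q_lcc} = ≤_{lcc,Q_lcc}; moreover their open extensions coincide: ≼_lcc^o = ≼_{lcc,Q_lcc}^o = ≤_{lcc,Q_lcc}^o. -/

import Mathlib

/-! # Core syntax for the calculi L_lcc, L_name and LR

Following Schmidt-Schauß, Sabel, Machkasova,
"Simulation in the Call-by-Need Lambda-Calculus with Letrec, Case, Constructors, and Seq".

Expressions use de Bruijn indices.  A signature fixes the set of types, the data
constructors of each type together with their arities, and a distinguished type `Bool`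
with the 0-ary constructors `True` and `False`. -/



structure Sig : Type 1 where
  TyName : Type
  CName : TyName → Type
  deceq : ∀ T, DecidableEq (CName T)
  arity : ∀ T, CName T → ℕ
  boolTy : TyName
  trueC : CName boolTy
  falseC : CName boolTy
  true_arity : arity boolTy trueC = 0
  false_arity : arity boolTy falseC = 0
  true_ne_false : trueC ≠ falseC

variable (S : Sig)

/-- ℒ-expressions (de Bruijn): variables, applications, abstractions, fully saturated
constructor applications, `seq`, `case` (with exactly one alternative per constructor
of the scrutinized type; the alternative for `c` binds `arity c` variables), and
`letrec` with `n+1` mutually recursive bindings (so at least one binding); the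
bindings and the body are under the `n+1` letrec binders.
The letrec-free expressions are the expressions of `L_lcc`. -/
inductive Exp : Type where
  | var : ℕ → Exp
  | app : Exp → Exp → Exp
  | lam : Exp → Exp
  | constr : (T : S.TyName) → (c : S.CName T) → (Fin (S.arity T c) → Exp) → Exp
  | seqE : Exp → Exp → Exp
  | caseE : (T : S.TyName) → Exp → ((c : S.CName T) → Exp) → Exp
  | letrecE : (n : ℕ) → (Fin (n+1) → Exp) → Exp → Exp

namespace Core

variable {S}

/-- lift a renaming under `m` binders -/
def liftN (m : ℕ) (f : ℕ → ℕ) : ℕ → ℕ := fun k => if k < m then k else f (k - m) + m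

/-- renaming of de Bruijn indices -/
def rename (f : ℕ → ℕ) : Exp S → Exp S
  | .var k => .var (f k)
  | .app u v => .app (rename f u) (rename f v)
  | .lam u => .lam (rename (liftN 1 f) u)
  | .constr T c args => .constr T c (fun i => rename f (args i))
  | .seqE u v => .seqE (rename f u) (rename f v)
  | .caseE T e alts => .caseE T (rename f e) (fun c => rename (liftN (S.arity T c) f) (alts c))
  | .letrecE n b t => .letrecE n (fun i => rename (liftN (n+1) f) (b i)) (rename (liftN (n+1) f) t)

/-- lift a substitution under `m` binders -/
def upN (m : ℕ) (σ : ℕ → Exp S) : ℕ → Exp S :=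
  fun k => if k < m then .var k else rename (· + m) (σ (k - m))

/-- parallel substitution -/
def subst (σ : ℕ → Exp S) : Exp S → Exp S
  | .var k => σ k
  | .app u v => .app (subst σ u) (subst σ v)
  | .lam u => .lam (subst (upN 1 σ) u)
  | .constr T c args => .constr T c (fun i => subst σ (args i))
  | .seqE u v => .seqE (subst σ u) (subst σ v)
  | .caseE T e alts => .caseE T (subst σ e) (fun c => subst (upN (S.arity T c) σ) (alts c))
  | .letrecE n b t => .letrecE n (fun i => subst (upN (n+1) σ) (b i)) (subst (upN (n+1) σ) t)

/-- the substitution `[t/x0]` for the outermost binder -/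
def consSub (t : Exp S) : ℕ → Exp S
  | 0 => t
  | (k+1) => .var k

/-- the substitution replacing the `m` innermost binders by `args` -/
def instSub {m : ℕ} (args : Fin m → Exp S) : ℕ → Exp S :=
  fun k => if h : k < m then args ⟨k, h⟩ else .var (k - m)

/-- `closedUnder d e`: all free de Bruijn indices of `e` are `< d` -/
def closedUnder : ℕ → Exp S → Prop
  | d, .var k => k < d
  | d, .app u v => closedUnder d u ∧ closedUnder d v
  | d, .lam u => closedUnder (d+1) u
  | d, .constr _ _ args => ∀ i, closedUnder d (args i)
  | d, .seqE u v => closedUnder d u ∧ closedUnder d v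
  | d, .caseE T e alts => closedUnder d e ∧ ∀ c, closedUnder (d + S.arity T c) (alts c)
  | d, .letrecE n b t => (∀ i, closedUnder (d + (n+1)) (b i)) ∧ closedUnder (d + (n+1)) t

/-- a closed expression -/
def closed (e : Exp S) : Prop := closedUnder 0 e

/-- letrec-free expressions, i.e. the expressions of the calculus `L_lcc` -/
def lfree : Exp S → Prop
  | .var _ => True
  | .app u v => lfree u ∧ lfree v
  | .lam u => lfree u
  | .constr _ _ args => ∀ i, lfree (args i)
  | .seqE u v => lfree u ∧ lfree v
  | .caseE _ e alts => lfree e ∧ ∀ c, lfree (alts c)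
  | .letrecE _ _ _ => False

/-- values: abstractions and constructor applications -/
def isValue : Exp S → Prop
  | .lam _ => True
  | .constr _ _ _ => True
  | _ => False

/-- constructor applications -/
def isConstrApp (e : Exp S) : Prop := ∃ T c args, e = .constr T c args

/-- the diverging expression `Ω = (λz. z z) (λx. x x)` -/
def Omega : Exp S :=
  .app (.lam (.app (.var 0) (.var 0))) (.lam (.app (.var 0) (.var 0)))

/-- the constructor `True` (of the distinguished type `Bool`, arity 0) -/
def trueE : Exp S := .constr S.boolTy S.trueC (fun _ => .var 0)

/-- update the alternative for constructor `c0` -/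
def updAlt {T : S.TyName} (alts : (c : S.CName T) → Exp S) (c0 : S.CName T) (e : Exp S) :
    (c : S.CName T) → Exp S :=
  fun c => letI := S.deceq T; if c = c0 then e else alts c

end Core
namespace Core

variable {S : Sig}

/-! ## Contexts -/

/-- reduction contexts of `L_lcc` (and `A`-contexts of `L_name`):
`A ::= [·] | (A s) | (case_T A of alts) | (seq A s)` -/
inductive ACtx (S : Sig) : Type where
  | hole : ACtx S
  | appA : ACtx S → Exp S → ACtx S
  | seqA : ACtx S → Exp S → ACtx S
  | caseA : (T : S.TyName) → ACtx S → ((c : S.CName T) → Exp S) → ACtx S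

/-- plugging an expression into an `A`-context -/
def plugA : ACtx S → Exp S → Exp S
  | .hole, e => e
  | .appA A t, e => .app (plugA A e) t
  | .seqA A t, e => .seqE (plugA A e) t
  | .caseA T A alts, e => .caseE T (plugA A e) alts

/-- renaming an `A`-context (there are no binders above the hole) -/
def renameA (f : ℕ → ℕ) : ACtx S → ACtx S
  | .hole => .hole
  | .appA A t => .appA (renameA f A) (rename f t)
  | .seqA A t => .seqA (renameA f A) (rename f t)
  | .caseA T A alts => .caseA T (renameA f A) (fun c => rename (liftN (S.arity T c) f) (alts c))

/-- general (one-hole, possibly capturing) contexts over ℒ-expressions -/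
inductive Ctx (S : Sig) : Type where
  | hole : Ctx S
  | appL : Ctx S → Exp S → Ctx S
  | appR : Exp S → Ctx S → Ctx S
  | lamC : Ctx S → Ctx S
  | seqL : Ctx S → Exp S → Ctx S
  | seqR : Exp S → Ctx S → Ctx S
  | constrC : (T : S.TyName) → (c : S.CName T) → Fin (S.arity T c) →
      (Fin (S.arity T c) → Exp S) → Ctx S → Ctx S
  | caseScrut : (T : S.TyName) → Ctx S → ((c : S.CName T) → Exp S) → Ctx S
  | caseAlt : (T : S.TyName) → (c0 : S.CName T) → Exp S → ((c : S.CName T) → Exp S) →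
      Ctx S → Ctx S
  | letrecB : (n : ℕ) → Fin (n+1) → (Fin (n+1) → Exp S) → Ctx S → Exp S → Ctx S
  | letrecT : (n : ℕ) → (Fin (n+1) → Exp S) → Ctx S → Ctx S

/-- plugging (capture-permitting) into a general context -/
def plugC : Ctx S → Exp S → Exp S
  | .hole, e => e
  | .appL C t, e => .app (plugC C e) t
  | .appR t C, e => .app t (plugC C e)
  | .lamC C, e => .lam (plugC C e)
  | .seqL C t, e => .seqE (plugC C e) t
  | .seqR t C, e => .seqE t (plugC C e)
  | .constrC T c i args C, e => .constr T c (Function.update args i (plugC C e))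
  | .caseScrut T C alts, e => .caseE T (plugC C e) alts
  | .caseAlt T c0 scrut alts C, e => .caseE T scrut (updAlt alts c0 (plugC C e))
  | .letrecB n i b C t, e => .letrecE n (Function.update b i (plugC C e)) t
  | .letrecT n b C, e => .letrecE n b (plugC C e)

/-- number of binders above the hole of a context -/
def depthC : Ctx S → ℕ
  | .hole => 0
  | .appL C _ => depthC C
  | .appR _ C => depthC C
  | .lamC C => depthC C + 1
  | .seqL C _ => depthC C
  | .seqR _ C => depthC C
  | .constrC _ _ _ _ C => depthC C
  | .caseScrut _ C _ => depthC C
  | .caseAlt T c0 _ _ C => depthC C + S.arity T c0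
  | .letrecB n _ _ C _ => depthC C + (n+1)
  | .letrecT n _ C => depthC C + (n+1)

/-- letrec-free contexts, i.e. the contexts of `L_lcc` -/
def lfreeCtx : Ctx S → Prop
  | .hole => True
  | .appL C t => lfreeCtx C ∧ lfree t
  | .appR t C => lfree t ∧ lfreeCtx C
  | .lamC C => lfreeCtx C
  | .seqL C t => lfreeCtx C ∧ lfree t
  | .seqR t C => lfree t ∧ lfreeCtx C
  | .constrC _ _ _ args C => (∀ i, lfree (args i)) ∧ lfreeCtx C
  | .caseScrut _ C alts => lfreeCtx C ∧ ∀ c, lfree (alts c)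
  | .caseAlt _ _ scrut alts C => lfree scrut ∧ (∀ c, lfree (alts c)) ∧ lfreeCtx C
  | .letrecB _ _ _ _ _ => False
  | .letrecT _ _ _ => False

/-! ## The calculus `L_lcc` -/

/-- the basic reduction rules (nbeta), (nseq), (ncase) of `L_lcc` -/
inductive LccBase : Exp S → Exp S → Prop where
  | nbeta {u t} : LccBase (.app (.lam u) t) (subst (consSub t) u)
  | nseq {v t} : isValue v → LccBase (.seqE v t) t
  | ncase {T c args alts} :
      LccBase (.caseE T (.constr T c args) alts) (subst (instSub args) (alts c))

/-- normal-order reduction of `L_lcc`: a basic rule inside a reduction context -/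
def lccStep (s t : Exp S) : Prop :=
  ∃ (A : ACtx S) (r r' : Exp S), LccBase r r' ∧ s = plugA A r ∧ t = plugA A r'

/-- `s` reduces in finitely many normal-order steps to the value `v` -/
def lccConvTo (s v : Exp S) : Prop := Relation.ReflTransGen lccStep s v ∧ isValue v

/-- convergence in `L_lcc` -/
def lccConv (s : Exp S) : Prop := ∃ v, lccConvTo s v

/-- contextual preorder of `L_lcc` (quantifying over the letrec-free contexts) -/
def leLcc (s t : Exp S) : Prop :=
  ∀ C : Ctx S, lfreeCtx C → lccConv (plugC C s) → lccConv (plugC C t)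

/-- contextual equivalence of `L_lcc` -/
def eqLcc (s t : Exp S) : Prop := leLcc s t ∧ leLcc t s

/-- open extension of a relation, w.r.t. closing `L_lcc`-substitutions -/
def openL (η : Exp S → Exp S → Prop) (s t : Exp S) : Prop :=
  ∀ σ : ℕ → Exp S, (∀ k, lfree (σ k)) →
    closed (subst σ s) → closed (subst σ t) → η (subst σ s) (subst σ t)

/-- `cBot`: expressions all of whose closing `L_lcc`-instances diverge -/
def cBot (s : Exp S) : Prop :=
  ∀ σ : ℕ → Exp S, (∀ k, lfree (σ k)) → closed (subst σ s) → ¬ lccConv (subst σ s)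

/-- greatest fixpoint of a (monotone) operator on relations:
the union of all post-fixed points -/
def gfpRel {α : Type*} (F : (α → α → Prop) → (α → α → Prop)) (a b : α) : Prop :=
  ∃ η, (∀ x y, η x y → F η x y) ∧ η a b

/-- the operator `F_lcc` for applicative similarity in `L_lcc` -/
def Flcc (η : Exp S → Exp S → Prop) (s t : Exp S) : Prop :=
  (∀ s', lccConvTo s (.lam s') →
      ((∃ t', lccConvTo t (.lam t') ∧ openL η s' t') ∨
       (∃ T c targs, lccConvTo t (.constr T c targs) ∧ cBot s'))) ∧
  (∀ T c args, lccConvTo s (.constr T c args) →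
      ∃ targs, lccConvTo t (.constr T c targs) ∧ ∀ i, η (args i) (targs i))

/-- applicative similarity `≼_lcc` in `L_lcc` -/
def simLcc : Exp S → Exp S → Prop := gfpRel Flcc

end Core
namespace Core

variable {S : Sig}

/-! ## The test contexts `Q_lcc` and `Q_CE` -/

/-- the context `case_T [·] of … ((c x1 … x_ar) → x_i) …`, all other alternatives `Ω` -/
def caseSelCtx (T : S.TyName) (c : S.CName T) (i : Fin (S.arity T c)) : Exp S → Exp S :=
  fun e => .caseE T e (fun c' => letI := S.deceq T; if c' = c then .var i else Omega)

/-- the context `case_T [·] of … ((c x1 … x_ar) → True) …`, all other alternatives `Ω` -/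
def caseTrueCtx (T : S.TyName) (c : S.CName T) : Exp S → Exp S :=
  fun e => .caseE T e (fun c' => letI := S.deceq T; if c' = c then trueE else Omega)

/-- the set `Q_lcc`: application to a closed `L_lcc`-expression, the selector case
contexts, and the `True` case contexts -/
def Qlcc (S : Sig) : Set (Exp S → Exp S) :=
  {f | (∃ r : Exp S, lfree r ∧ closed r ∧ f = fun e => .app e r) ∨
       (∃ T c i, f = caseSelCtx T c i) ∨
       (∃ T c, f = caseTrueCtx T c)}

/-- the set `CE_lcc` of closed letrec-free expressions generated by
`r ::= Ω | λx.s | (c r1 … r_ar)` -/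
inductive CE : Exp S → Prop where
  | omega : CE Omega
  | abs {u : Exp S} : lfree (Exp.lam u) → closed (Exp.lam u) → CE (.lam u)
  | constrI {T c} {args : Fin (S.arity T c) → Exp S} :
      (∀ i, CE (args i)) → CE (.constr T c args)

/-- the set `Q_CE`: like `Q_lcc`, but the arguments in application contexts are
restricted to `CE_lcc` -/
def QCE (S : Sig) : Set (Exp S → Exp S) :=
  {f | (∃ r : Exp S, CE r ∧ f = fun e => .app e r) ∨
       (∃ T c i, f = caseSelCtx T c i) ∨
       (∃ T c, f = caseTrueCtx T c)}

/-- `Q1 (Q2 (… (Qn s)))` -/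
def applyAll (l : List (Exp S → Exp S)) (s : Exp S) : Exp S := l.foldr (fun f e => f e) s

/-! ### `Q`-similarity and the inductive `Q`-preorder in `L_lcc` -/

/-- the `Q`-experiment operator for `L_lcc`, instantiated with a set `𝒬` of contexts -/
def FQlcc (𝒬 : Set (Exp S → Exp S)) (η : Exp S → Exp S → Prop) (s t : Exp S) : Prop :=
  ∀ v1, lccConvTo s v1 → ∃ v2, lccConvTo t v2 ∧ ∀ f ∈ 𝒬, η (f v1) (f v2)

/-- `𝒬`-similarity in `L_lcc` -/
def simQlcc (𝒬 : Set (Exp S → Exp S)) : Exp S → Exp S → Prop := gfpRel (FQlcc 𝒬)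

/-- the inductively defined preorder `≤_{lcc,𝒬}` -/
def leQlcc (𝒬 : Set (Exp S → Exp S)) (s t : Exp S) : Prop :=
  ∀ l : List (Exp S → Exp S), (∀ f ∈ l, f ∈ 𝒬) →
    lccConv (applyAll l s) → lccConv (applyAll l t)

end Core
namespace Core

variable {S : Sig}

/-! ## The call-by-need calculus `LR` -/

/-- variable-to-variable binding chains in a letrec environment -/
inductive derefChain {n : ℕ} (b : Fin (n+1) → Exp S) : Fin (n+1) → Fin (n+1) → Prop where
  | refl (i) : derefChain b i i
  | step {i j k : Fin (n+1)} : b i = .var (j : ℕ) → derefChain b j k → derefChain b i k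

/-- `Needed b body i`: binding `i` is visited by the labeling algorithm (its value is
needed), starting from the body of the top-level letrec -/
inductive Needed {n : ℕ} (b : Fin (n+1) → Exp S) (body : Exp S) : Fin (n+1) → Prop where
  | ofBody {A : ACtx S} {i : Fin (n+1)} : body = plugA A (.var (i : ℕ)) → Needed b body i
  | ofBind {k} {A : ACtx S} {i : Fin (n+1)} :
      Needed b body k → b k = plugA A (.var (i : ℕ)) → Needed b body i

/-- renaming used when merging letrec environments: the outer part
(`N` outer bindings, `M` inner bindings) -/
def rhoOut (N M : ℕ) : ℕ → ℕ := fun k => if k < N then k else k + M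

/-- renaming used when merging letrec environments: the inner part -/
def rhoIn (N M : ℕ) : ℕ → ℕ :=
  fun k => if k < M then k + N else if k < M + N then k - M else k

/-- merged environment of `(llet-in)`: outer bindings first, then inner bindings -/
def mergeEnv {n m : ℕ} (b : Fin (n+1) → Exp S) (b2 : Fin (m+1) → Exp S) :
    Fin (n+m+1+1) → Exp S :=
  fun j => if h : (j : ℕ) < n+1
    then rename (rhoOut (n+1) (m+1)) (b ⟨j, h⟩)
    else rename (rhoIn (n+1) (m+1)) (b2 ⟨(j : ℕ) - (n+1), by omega⟩)

/-- merged environment of `(llet-e)`: the environment of the letrec bound at `i`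
is flattened into the outer environment, the binding `i` becomes the inner body -/
def mergeEnvAt {n m : ℕ} (b : Fin (n+1) → Exp S) (i : Fin (n+1))
    (b2 : Fin (m+1) → Exp S) (t2 : Exp S) : Fin (n+m+1+1) → Exp S :=
  fun j => if h : (j : ℕ) < n+1
    then (if (⟨j, h⟩ : Fin (n+1)) = i
          then rename (rhoIn (n+1) (m+1)) t2
          else rename (rhoOut (n+1) (m+1)) (b ⟨j, h⟩))
    else rename (rhoIn (n+1) (m+1)) (b2 ⟨(j : ℕ) - (n+1), by omega⟩)

/-- the environment produced by `(case-in)`/`(case-e)` with `arity c = m+1`: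
all old bindings are shifted, binding `j` becomes `c y1 … y_{m+1}` for the fresh
bindings `y_q = s_q` appended at the end -/
def caseShareEnv {n m : ℕ} (b : Fin (n+1) → Exp S) (j : Fin (n+1))
    {T : S.TyName} (c : S.CName T) (h : S.arity T c = m+1)
    (args : Fin (S.arity T c) → Exp S) : Fin (n+m+1+1) → Exp S :=
  fun p => if hp : (p : ℕ) < n+1
    then (if (⟨p, hp⟩ : Fin (n+1)) = j
          then .constr T c (fun q => .var (n+1+(q : ℕ)))
          else rename (rhoOut (n+1) (m+1)) (b ⟨p, hp⟩))
    else rename (rhoOut (n+1) (m+1)) (args (Fin.cast h.symm ⟨(p : ℕ) - (n+1), by omega⟩))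

/-- the replacement for a `(case-in)`/`(case-e)` redex: `letrec z1 = y1, …, z_{m+1} = y_{m+1}
in alt`, where the `y_q` are the fresh environment bindings (indices `n+1+q` at top level) -/
def caseShareBody {n m : ℕ} {T : S.TyName} (c : S.CName T) (_h : S.arity T c = m+1)
    (alts : (c : S.CName T) → Exp S) : Exp S :=
  .letrecE m (fun q => .var (n+1+(m+1)+(q : ℕ)))
    (rename (liftN (m+1) (rhoOut (n+1) (m+1))) (alts c))

/-- the basic `LR`-rules not involving the top-level environment:
(lbeta), (seq-c), (case-c), (lapp), (lseq), (lcase) -/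
inductive LRbase : Exp S → Exp S → Prop where
  | lbeta {u t} :
      LRbase (.app (.lam u) t) (.letrecE 0 (fun _ => rename (· + 1) t) u)
  | seqc {v t} : isValue v → LRbase (.seqE v t) t
  | casec0 {T c args alts} (h : S.arity T c = 0) :
      LRbase (.caseE T (.constr T c args) alts) (alts c)
  | casec1 {T c args alts m} (h : S.arity T c = m+1) :
      LRbase (.caseE T (.constr T c args) alts)
        (.letrecE m (fun i => rename (· + (m+1)) (args (Fin.cast h.symm i))) (alts c))
  | lapp {n b e t} :
      LRbase (.app (.letrecE n b e) t) (.letrecE n b (.app e (rename (· + (n+1)) t)))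
  | lseq {n b e t} :
      LRbase (.seqE (.letrecE n b e) t) (.letrecE n b (.seqE e (rename (· + (n+1)) t)))
  | lcase {n b e T alts} :
      LRbase (.caseE T (.letrecE n b e) alts)
        (.letrecE n b (.caseE T e (fun c => rename (liftN (S.arity T c) (· + (n+1))) (alts c))))

/-- normal-order reduction `→_LR` of the call-by-need calculus `LR`:
the rules of Fig. 1, applied at the position determined by the labeling algorithm
(in the body or in a needed binding of the top-level letrec, or — for expressions
without a top-level letrec — along the application/seq/case spine). -/
inductive LRstep : Exp S → Exp S → Prop where
  /- basic rule at the top (no top-level letrec environment involved): -/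
  | topA {A : ACtx S} {r r'} : LRbase r r' → LRstep (plugA A r) (plugA A r')
  /- basic rule in the body of the top-level letrec: -/
  | bodyA {n} {b : Fin (n+1) → Exp S} {A : ACtx S} {r r'} :
      LRbase r r' → LRstep (.letrecE n b (plugA A r)) (.letrecE n b (plugA A r'))
  /- basic rule inside a needed binding: -/
  | bindA {n} {b : Fin (n+1) → Exp S} {body} {i : Fin (n+1)} {A : ACtx S} {r r'} :
      Needed b body i → b i = plugA A r → LRbase r r' →
      LRstep (.letrecE n b body) (.letrecE n (Function.update b i (plugA A r')) body)
  /- (llet-in): -/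
  | lletIn {n b m b2 t2} :
      LRstep (.letrecE n b (.letrecE m b2 t2))
        (.letrecE (n+m+1) (mergeEnv b b2) (rename (rhoIn (n+1) (m+1)) t2))
  /- (llet-e): -/
  | lletE {n b body} {i : Fin (n+1)} {m b2 t2} :
      Needed b body i → b i = .letrecE m b2 t2 →
      LRstep (.letrecE n b body)
        (.letrecE (n+m+1) (mergeEnvAt b i b2 t2) (rename (rhoOut (n+1) (m+1)) body))
  /- (cp-in): -/
  | cpIn {n} {b : Fin (n+1) → Exp S} {A : ACtx S} {i j : Fin (n+1)} {u} :
      derefChain b i j → b j = .lam u →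
      LRstep (.letrecE n b (plugA A (.var (i : ℕ)))) (.letrecE n b (plugA A (.lam u)))
  /- (cp-e): -/
  | cpE {n} {b : Fin (n+1) → Exp S} {body} {k : Fin (n+1)} {A : ACtx S} {i j : Fin (n+1)} {u} :
      Needed b body k → b k = plugA A (.var (i : ℕ)) → derefChain b i j → b j = .lam u →
      LRstep (.letrecE n b body) (.letrecE n (Function.update b k (plugA A (.lam u))) body)
  /- (seq-in): -/
  | seqIn {n} {b : Fin (n+1) → Exp S} {A : ACtx S} {i j : Fin (n+1)} {t} :
      derefChain b i j → isConstrApp (b j) →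
      LRstep (.letrecE n b (plugA A (.seqE (.var (i : ℕ)) t)))
        (.letrecE n b (plugA A t))
  /- (seq-e): -/
  | seqEe {n} {b : Fin (n+1) → Exp S} {body} {k : Fin (n+1)} {A : ACtx S} {i j : Fin (n+1)} {t} :
      Needed b body k → b k = plugA A (.seqE (.var (i : ℕ)) t) →
      derefChain b i j → isConstrApp (b j) →
      LRstep (.letrecE n b body) (.letrecE n (Function.update b k (plugA A t)) body)
  /- (case-in), scrutinized constructor of arity 0: -/
  | caseIn0 {n} {b : Fin (n+1) → Exp S} {A : ACtx S} {i j : Fin (n+1)} {T c args alts} :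
      derefChain b i j → b j = .constr T c args → S.arity T c = 0 →
      LRstep (.letrecE n b (plugA A (.caseE T (.var (i : ℕ)) alts)))
        (.letrecE n b (plugA A (alts c)))
  /- (case-e), scrutinized constructor of arity 0: -/
  | caseE0 {n} {b : Fin (n+1) → Exp S} {body} {k : Fin (n+1)} {A : ACtx S} {i j : Fin (n+1)}
      {T c args alts} :
      Needed b body k → b k = plugA A (.caseE T (.var (i : ℕ)) alts) →
      derefChain b i j → b j = .constr T c args → S.arity T c = 0 →
      LRstep (.letrecE n b body) (.letrecE n (Function.update b k (plugA A (alts c))) body)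
  /- (case-in), arity ≥ 1: the constructor arguments are shared in fresh bindings -/
  | caseIn1 {n} {b : Fin (n+1) → Exp S} {A : ACtx S} {i j : Fin (n+1)} {T c args alts m}
      (h : S.arity T c = m+1) :
      derefChain b i j → b j = .constr T c args →
      LRstep (.letrecE n b (plugA A (.caseE T (.var (i : ℕ)) alts)))
        (.letrecE (n+m+1) (caseShareEnv b j c h args)
          (plugA (renameA (rhoOut (n+1) (m+1)) A) (caseShareBody (n := n) c h alts)))
  /- (case-e), arity ≥ 1: -/
  | caseE1 {n} {b : Fin (n+1) → Exp S} {body} {k : Fin (n+1)} {A : ACtx S} {i j : Fin (n+1)}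
      {T c args alts m} (h : S.arity T c = m+1) :
      Needed b body k → b k = plugA A (.caseE T (.var (i : ℕ)) alts) →
      derefChain b i j → b j = .constr T c args →
      LRstep (.letrecE n b body)
        (.letrecE (n+m+1)
          (Function.update (caseShareEnv b j c h args)
            (Fin.castLE (by omega) k)
            (plugA (renameA (rhoOut (n+1) (m+1)) A) (caseShareBody (n := n) c h alts)))
          (rename (rhoOut (n+1) (m+1)) body))

/-- weak head normal forms of `LR`: values, `letrec Env in v` for a value `v`, and
`letrec x1 = (c s⃗), x2 = x1, …, xm = x_{m-1}, Env in xm` -/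
def isLRwhnf (s : Exp S) : Prop :=
  isValue s ∨
  ∃ (n : ℕ) (b : Fin (n+1) → Exp S) (body : Exp S), s = .letrecE n b body ∧
    (isValue body ∨ ∃ i j : Fin (n+1), body = .var (i : ℕ) ∧ derefChain b i j ∧ isConstrApp (b j))

/-- `s` reduces in finitely many `→_LR`-steps to an `LR`-WHNF `v` -/
def lrConvTo (s v : Exp S) : Prop := Relation.ReflTransGen LRstep s v ∧ isLRwhnf v

/-- convergence in `LR` -/
def lrConv (s : Exp S) : Prop := ∃ v, lrConvTo s v

/-- contextual preorder of `LR` -/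
def leLR (s t : Exp S) : Prop := ∀ C : Ctx S, lrConv (plugC C s) → lrConv (plugC C t)

/-- contextual equivalence of `LR` -/
def eqLR (s t : Exp S) : Prop := leLR s t ∧ leLR t s

end Core
namespace Core

variable {S : Sig}

/-! ## The call-by-name calculus `L_name` -/

/-- a letrec frame (one `letrec` environment) -/
def Frame (S : Sig) : Type := Σ n : ℕ, Fin (n+1) → Exp S

/-- plugging under a stack of letrec frames (`L`-contexts), outermost frame first -/
def plugFrames : List (Frame S) → Exp S → Exp S
  | [], e => e
  | ⟨n, b⟩ :: fs, e => .letrecE n b (plugFrames fs e)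

/-- looking up a de Bruijn index in a stack of letrec frames given innermost-first;
the result is weakened to the innermost level -/
def lookRev : List (Frame S) → ℕ → Option (Exp S)
  | [], _ => none
  | ⟨n, b⟩ :: rest, k =>
      if h : k < n+1 then some (b ⟨k, h⟩)
      else (lookRev rest (k - (n+1))).map (rename (· + (n+1)))

/-- the basic rules of `L_name`: (beta), (seq), (case) — with substitution —
and (lapp), (lseq), (lcase) -/
inductive NBase : Exp S → Exp S → Prop where
  | beta {u t} : NBase (.app (.lam u) t) (subst (consSub t) u)
  | seqv {v t} : isValue v → NBase (.seqE v t) t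
  | casec {T c args alts} :
      NBase (.caseE T (.constr T c args) alts) (subst (instSub args) (alts c))
  | lapp {n b e t} :
      NBase (.app (.letrecE n b e) t) (.letrecE n b (.app e (rename (· + (n+1)) t)))
  | lseq {n b e t} :
      NBase (.seqE (.letrecE n b e) t) (.letrecE n b (.seqE e (rename (· + (n+1)) t)))
  | lcase {n b e T alts} :
      NBase (.caseE T (.letrecE n b e) alts)
        (.letrecE n b (.caseE T e (fun c => rename (liftN (S.arity T c) (· + (n+1))) (alts c))))

/-- normal-order reduction `→_name` of `L_name`: a basic rule, or the copy rule (gcp),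
inside a reduction context `L[A]` -/
inductive NStep : Exp S → Exp S → Prop where
  | base {fs : List (Frame S)} {A : ACtx S} {r r'} :
      NBase r r' → NStep (plugFrames fs (plugA A r)) (plugFrames fs (plugA A r'))
  | gcp {fs : List (Frame S)} {A : ACtx S} {k : ℕ} {e : Exp S} :
      lookRev fs.reverse k = some e →
      NStep (plugFrames fs (plugA A (.var k))) (plugFrames fs (plugA A e))

/-- weak head normal forms of `L_name`: `L[v]` for a value `v` -/
def isNameWhnf (s : Exp S) : Prop :=
  ∃ (fs : List (Frame S)) (v : Exp S), s = plugFrames fs v ∧ isValue v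

/-- `s` reduces in finitely many `→_name`-steps to an `L_name`-WHNF `v` -/
def nameConvTo (s v : Exp S) : Prop := Relation.ReflTransGen NStep s v ∧ isNameWhnf v

/-- convergence in `L_name` -/
def nameConv (s : Exp S) : Prop := ∃ v, nameConvTo s v

/-- contextual preorder of `L_name` -/
def leName (s t : Exp S) : Prop := ∀ C : Ctx S, nameConv (plugC C s) → nameConv (plugC C t)

/-- contextual equivalence of `L_name` -/
def eqName (s t : Exp S) : Prop := leName s t ∧ leName t s

/-! ## The translation `N : L_name → L_lcc` via multi-fixpoint combinators -/

/-- iterated application `f a1 … an` -/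
def apps (f : Exp S) (l : List (Exp S)) : Exp S := l.foldl .app f

/-- iterated abstraction `λ^k. e` -/
def lamN : ℕ → Exp S → Exp S
  | 0, e => e
  | (k+1), e => .lam (lamN k e)

/-- shift all indices `≥ c` by `k` -/
def shiftCut (c k : ℕ) : Exp S → Exp S := rename (fun x => if x < c then x else x + k)

/-- the argument list `[g (N-1), …, g 0]`, so that after `N` beta steps the
binder with de Bruijn index `i` receives `g i` -/
def argsOf {N : ℕ} (g : Fin N → Exp S) : List (Exp S) := (List.ofFn g).reverse

/-- `U_i = (x_i' x_1' … x_n')` (under the outer binders) -/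
def Uarg (N : ℕ) (i : Fin N) : Exp S :=
  apps (.var (i : ℕ)) (argsOf (fun j : Fin N => .var (j : ℕ)))

/-- `X_i' = λ x1 … xn. F_i (x1 x1 … xn) … (xn x1 … xn)` with `F_i = λ x1 … xn. gi` -/
def Xarg (N : ℕ) (gi : Exp S) : Exp S :=
  lamN N (apps (lamN N (shiftCut N N gi))
    (argsOf (fun j : Fin N => apps (.var (j : ℕ)) (argsOf (fun l : Fin N => .var (l : ℕ))))))

/-- the translation of one letrec: `(λ x1' … xn'. (λ x1 … xn. t') U1 … Un) X1' … Xn'` -/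
def letrecTrans (N : ℕ) (g : Fin N → Exp S) (t' : Exp S) : Exp S :=
  apps (lamN N (apps (lamN N (shiftCut N N t')) (argsOf (Uarg N))))
    (argsOf (fun i => Xarg N (g i)))

/-- the translation `N : L_name → L_lcc`, eliminating letrec by multi-fixpoint
combinators; it is homomorphic on all other constructs.
(The translation `W : LR → L_name` is the identity.) -/
def Ntr : Exp S → Exp S
  | .var k => .var k
  | .app u v => .app (Ntr u) (Ntr v)
  | .lam u => .lam (Ntr u)
  | .constr T c args => .constr T c (fun i => Ntr (args i))
  | .seqE u v => .seqE (Ntr u) (Ntr v)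
  | .caseE T e alts => .caseE T (Ntr e) (fun c => Ntr (alts c))
  | .letrecE n b t => letrecTrans (n+1) (fun i => Ntr (b i)) (Ntr t)

end Core
namespace Core

variable {S : Sig}

/-! ## `Q`-similarity in `LR` -/

/-- open extension of a relation w.r.t. closing ℒ-substitutions -/
def openAll (η : Exp S → Exp S → Prop) (s t : Exp S) : Prop :=
  ∀ σ : ℕ → Exp S, closed (subst σ s) → closed (subst σ t) → η (subst σ s) (subst σ t)

/-- the `Q`-experiment operator for `LR`, instantiated with a set `𝒬` of contexts -/
def FQLR (𝒬 : Set (Exp S → Exp S)) (η : Exp S → Exp S → Prop) (s t : Exp S) : Prop :=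
  ∀ v1, lrConvTo s v1 → ∃ v2, lrConvTo t v2 ∧ ∀ f ∈ 𝒬, η (f v1) (f v2)

/-- `𝒬`-similarity in `LR` -/
def simQLR (𝒬 : Set (Exp S → Exp S)) : Exp S → Exp S → Prop := gfpRel (FQLR 𝒬)

/-- the inductively defined preorder `≤_{LR,𝒬}` -/
def leQLR (𝒬 : Set (Exp S → Exp S)) (s t : Exp S) : Prop :=
  ∀ l : List (Exp S → Exp S), (∀ f ∈ l, f ∈ 𝒬) →
    lrConv (applyAll l s) → lrConv (applyAll l t)

end Core


namespace Core

variable {S : Sig}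

/-! ### Renaming and substitution infrastructure -/

theorem liftN_ext {f g : ℕ → ℕ} (h : ∀ k, f k = g k) (m k : ℕ) : liftN m f k = liftN m g k := by
  simp only [liftN]; split <;> simp [h]

theorem liftN_id {f : ℕ → ℕ} (h : ∀ k, f k = k) (m k : ℕ) : liftN m f k = k := by
  simp only [liftN]; split
  · rfl
  · rw [h]; omega

theorem liftN_comp (f g : ℕ → ℕ) (m k : ℕ) :
    liftN m f (liftN m g k) = liftN m (fun j => f (g j)) k := by
  by_cases h : k < m
  · simp [liftN, h]
  · have h2 : ¬ (g (k - m) + m < m) := by omega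
    simp [liftN, h, h2]

theorem rename_ext : ∀ (e : Exp S) {f g : ℕ → ℕ}, (∀ k, f k = g k) → rename f e = rename g e := by
  intro e
  induction e with
  | var k => intro f g h; simp [rename, h]
  | app u v ihu ihv => intro f g h; simp [rename, ihu h, ihv h]
  | lam u ih => intro f g h; simp only [rename]; rw [ih (liftN_ext h 1)]
  | constr T c args ih => intro f g h; simp only [rename]; congr 1; funext i; exact ih i h
  | seqE u v ihu ihv => intro f g h; simp [rename, ihu h, ihv h]
  | caseE T e alts ihe ihalts =>
      intro f g h; simp only [rename]
      refine congrArg₂ _ (ihe h) ?_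
      funext c; exact ihalts c (liftN_ext h _)
  | letrecE n b t ihb iht =>
      intro f g h; simp only [rename]
      refine congrArg₂ _ ?_ (iht (liftN_ext h _))
      funext i; exact ihb i (liftN_ext h _)

theorem rename_id : ∀ (e : Exp S) {f : ℕ → ℕ}, (∀ k, f k = k) → rename f e = e := by
  intro e
  induction e with
  | var k => intro f h; simp [rename, h]
  | app u v ihu ihv => intro f h; simp [rename, ihu h, ihv h]
  | lam u ih => intro f h; simp only [rename]; rw [ih (liftN_id h 1)]
  | constr T c args ih => intro f h; simp only [rename]; congr 1; funext i; exact ih i h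
  | seqE u v ihu ihv => intro f h; simp [rename, ihu h, ihv h]
  | caseE T e alts ihe ihalts =>
      intro f h; simp only [rename]
      refine congrArg₂ _ (ihe h) ?_
      funext c; exact ihalts c (liftN_id h _)
  | letrecE n b t ihb iht =>
      intro f h; simp only [rename]
      refine congrArg₂ _ ?_ (iht (liftN_id h _))
      funext i; exact ihb i (liftN_id h _)

theorem rename_comp : ∀ (e : Exp S) (f g : ℕ → ℕ),
    rename f (rename g e) = rename (fun k => f (g k)) e := by
  intro e
  induction e with
  | var k => intro f g; simp [rename]
  | app u v ihu ihv => intro f g; simp [rename, ihu, ihv]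
  | lam u ih =>
      intro f g; simp only [rename]
      rw [ih, rename_ext u (liftN_comp f g 1)]
  | constr T c args ih => intro f g; simp only [rename]; congr 1; funext i; exact ih i f g
  | seqE u v ihu ihv => intro f g; simp [rename, ihu, ihv]
  | caseE T e alts ihe ihalts =>
      intro f g; simp only [rename]
      refine congrArg₂ _ (ihe f g) ?_
      funext c; rw [ihalts, rename_ext (alts c) (liftN_comp f g _)]
  | letrecE n b t ihb iht =>
      intro f g; simp only [rename]
      refine congrArg₂ _ ?_ (by rw [iht, rename_ext t (liftN_comp f g _)])
      funext i; rw [ihb, rename_ext (b i) (liftN_comp f g _)]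

theorem subst_ext : ∀ (e : Exp S) {σ τ : ℕ → Exp S}, (∀ k, σ k = τ k) → subst σ e = subst τ e := by
  intro e
  induction e with
  | var k => intro σ τ h; simp [subst, h]
  | app u v ihu ihv => intro σ τ h; simp [subst, ihu h, ihv h]
  | lam u ih =>
      intro σ τ h; simp only [subst]
      rw [ih]; intro k; simp only [upN]; split <;> simp [h]
  | constr T c args ih => intro σ τ h; simp only [subst]; congr 1; funext i; exact ih i h
  | seqE u v ihu ihv => intro σ τ h; simp [subst, ihu h, ihv h]
  | caseE T e alts ihe ihalts =>
      intro σ τ h; simp only [subst]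
      refine congrArg₂ _ (ihe h) ?_
      funext c; apply ihalts; intro k; simp only [upN]; split <;> simp [h]
  | letrecE n b t ihb iht =>
      intro σ τ h; simp only [subst]
      have hl : ∀ k, upN (n+1) σ k = upN (n+1) τ k := by
        intro k; simp only [upN]; split <;> simp [h]
      refine congrArg₂ _ ?_ (iht hl)
      funext i; exact ihb i hl

end Core

namespace Core

variable {S : Sig}

theorem upN_upN (a b : ℕ) (σ : ℕ → Exp S) (k : ℕ) : upN a (upN b σ) k = upN (a+b) σ k := by
  by_cases h : k < a
  · simp only [upN, if_pos h]; rw [if_pos (by omega)]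
  · by_cases h2 : k - a < b
    · have h3 : k < a + b := by omega
      simp only [upN, if_neg h, if_pos h2, if_pos h3, rename]
      congr 1; omega
    · have h3 : ¬ k < a + b := by omega
      simp only [upN, if_neg h, if_neg h2, if_neg h3, rename_comp]
      rw [show k - a - b = k - (a+b) by omega]
      apply rename_ext; intro j; omega

theorem upN_zero (σ : ℕ → Exp S) (k : ℕ) : upN 0 σ k = σ k := by
  simp only [upN]
  rw [if_neg (by omega)]
  simpa using rename_id (σ (k - 0)) (f := (· + 0)) (fun j => rfl)

theorem subst_congr_closed : ∀ (e : Exp S) {d : ℕ} {σ τ : ℕ → Exp S},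
    closedUnder d e → (∀ k, k < d → σ k = τ k) → subst σ e = subst τ e := by
  intro e
  induction e with
  | var k => intro d σ τ hc h; exact h k hc
  | app u v ihu ihv =>
      intro d σ τ hc h; simp only [subst]
      rw [ihu hc.1 h, ihv hc.2 h]
  | lam u ih =>
      intro d σ τ hc h; simp only [subst]
      rw [ih hc (fun k hk => ?_)]
      simp only [upN]; split
      · rfl
      · rw [h (k-1) (by omega)]
  | constr T c args ih =>
      intro d σ τ hc h; simp only [subst]
      congr 1; funext i; exact ih i (hc i) h
  | seqE u v ihu ihv =>
      intro d σ τ hc h; simp only [subst]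
      rw [ihu hc.1 h, ihv hc.2 h]
  | caseE T e alts ihe ihalts =>
      intro d σ τ hc h; simp only [subst]
      refine congrArg₂ _ (ihe hc.1 h) ?_
      funext c
      refine ihalts c (hc.2 c) (fun k hk => ?_)
      simp only [upN]; split
      · rfl
      · rw [h (k - S.arity T c) (by omega)]
  | letrecE n b t ihb iht =>
      intro d σ τ hc h; simp only [subst]
      have h' : ∀ k, k < d + (n+1) → upN (n+1) σ k = upN (n+1) τ k := by
        intro k hk; simp only [upN]; split
        · rfl
        · rw [h (k - (n+1)) (by omega)]
      refine congrArg₂ _ ?_ (iht hc.2 h')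
      funext i; exact ihb i (hc.1 i) h'

theorem closedUnder_rename_iff : ∀ (e : Exp S) {f : ℕ → ℕ} {d m : ℕ},
    (∀ k, k < d ↔ f k < m) → (closedUnder m (rename f e) ↔ closedUnder d e) := by
  intro e
  induction e with
  | var k => intro f d m h; simpa [rename, closedUnder] using (h k).symm
  | app u v ihu ihv =>
      intro f d m h; simp only [rename, closedUnder]
      rw [ihu h, ihv h]
  | lam u ih =>
      intro f d m h; simp only [rename, closedUnder]
      refine ih (fun k => ?_)
      simp only [liftN]; split
      · omega
      · constructor <;> intro <;> [skip; skip] <;> first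
        | (have := (h (k-1)).mp (by omega); omega)
        | (have := (h (k-1)).mpr (by omega); omega)
  | constr T c args ih =>
      intro f d m h; simp only [rename, closedUnder]
      exact forall_congr' (fun i => ih i h)
  | seqE u v ihu ihv =>
      intro f d m h; simp only [rename, closedUnder]
      rw [ihu h, ihv h]
  | caseE T e alts ihe ihalts =>
      intro f d m h; simp only [rename, closedUnder]
      refine and_congr (ihe h) (forall_congr' (fun c => ihalts c (fun k => ?_)))
      simp only [liftN]; split
      · omega
      · constructor <;> intro <;> first
        | (have := (h (k - S.arity T c)).mp (by omega); omega)
        | (have := (h (k - S.arity T c)).mpr (by omega); omega)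
  | letrecE n b t ihb iht =>
      intro f d m h; simp only [rename, closedUnder]
      have h' : ∀ k, k < d + (n+1) ↔ liftN (n+1) f k < m + (n+1) := by
        intro k; simp only [liftN]; split
        · omega
        · constructor <;> intro <;> first
          | (have := (h (k - (n+1))).mp (by omega); omega)
          | (have := (h (k - (n+1))).mpr (by omega); omega)
      exact and_congr (forall_congr' (fun i => ihb i h')) (iht h')

theorem closedUnder_subst : ∀ (e : Exp S) {d m : ℕ} {σ : ℕ → Exp S},
    closedUnder d e → (∀ k, k < d → closedUnder m (σ k)) → closedUnder m (subst σ e) := by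
  intro e
  induction e with
  | var k => intro d m σ hc h; exact h k hc
  | app u v ihu ihv =>
      intro d m σ hc h; exact ⟨ihu hc.1 h, ihv hc.2 h⟩
  | lam u ih =>
      intro d m σ hc h
      refine ih hc (fun k hk => ?_)
      simp only [upN]; split
      · simpa [closedUnder] using by omega
      · exact (closedUnder_rename_iff _ (fun j => by omega)).mpr (h (k-1) (by omega))
  | constr T c args ih =>
      intro d m σ hc h; exact fun i => ih i (hc i) h
  | seqE u v ihu ihv =>
      intro d m σ hc h; exact ⟨ihu hc.1 h, ihv hc.2 h⟩
  | caseE T e alts ihe ihalts =>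
      intro d m σ hc h
      refine ⟨ihe hc.1 h, fun c => ihalts c (hc.2 c) (fun k hk => ?_)⟩
      simp only [upN]; split
      · simpa [closedUnder] using by omega
      · exact (closedUnder_rename_iff _ (fun j => by omega)).mpr (h _ (by omega))
  | letrecE n b t ihb iht =>
      intro d m σ hc h
      have h' : ∀ k, k < d + (n+1) → closedUnder (m + (n+1)) (upN (n+1) σ k) := by
        intro k hk; simp only [upN]; split
        · simpa [closedUnder] using by omega
        · exact (closedUnder_rename_iff _ (fun j => by omega)).mpr (h _ (by omega))
      exact ⟨fun i => ihb i (hc.1 i) h', iht hc.2 h'⟩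

theorem closedUnder_mono : ∀ (e : Exp S) {d d' : ℕ}, d ≤ d' → closedUnder d e → closedUnder d' e := by
  intro e
  induction e with
  | var k => intro d d' h hc; simp only [closedUnder] at *; omega
  | app u v ihu ihv => intro d d' h hc; exact ⟨ihu h hc.1, ihv h hc.2⟩
  | lam u ih => intro d d' h hc; exact ih (by omega) hc
  | constr T c args ih => intro d d' h hc; exact fun i => ih i h (hc i)
  | seqE u v ihu ihv => intro d d' h hc; exact ⟨ihu h hc.1, ihv h hc.2⟩
  | caseE T e alts ihe ihalts =>
      intro d d' h hc; exact ⟨ihe h hc.1, fun c => ihalts c (by omega) (hc.2 c)⟩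
  | letrecE n b t ihb iht =>
      intro d d' h hc; exact ⟨fun i => ihb i (by omega) (hc.1 i), iht (by omega) hc.2⟩

theorem lfree_rename : ∀ (e : Exp S) {f : ℕ → ℕ}, lfree e → lfree (rename f e) := by
  intro e
  induction e with
  | var k => intro f h; trivial
  | app u v ihu ihv => intro f h; exact ⟨ihu h.1, ihv h.2⟩
  | lam u ih => intro f h; exact ih h
  | constr T c args ih => intro f h; exact fun i => ih i (h i)
  | seqE u v ihu ihv => intro f h; exact ⟨ihu h.1, ihv h.2⟩
  | caseE T e alts ihe ihalts => intro f h; exact ⟨ihe h.1, fun c => ihalts c (h.2 c)⟩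
  | letrecE n b t ihb iht => intro f h; exact h.elim

theorem lfree_subst : ∀ (e : Exp S) {σ : ℕ → Exp S},
    lfree e → (∀ k, lfree (σ k)) → lfree (subst σ e) := by
  intro e
  induction e with
  | var k => intro σ h hσ; exact hσ k
  | app u v ihu ihv => intro σ h hσ; exact ⟨ihu h.1 hσ, ihv h.2 hσ⟩
  | lam u ih =>
      intro σ h hσ
      refine ih h (fun k => ?_)
      simp only [upN]; split
      · trivial
      · exact lfree_rename _ (hσ _)
  | constr T c args ih => intro σ h hσ; exact fun i => ih i (h i) hσ
  | seqE u v ihu ihv => intro σ h hσ; exact ⟨ihu h.1 hσ, ihv h.2 hσ⟩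
  | caseE T e alts ihe ihalts =>
      intro σ h hσ
      refine ⟨ihe h.1 hσ, fun c => ihalts c (h.2 c) (fun k => ?_)⟩
      simp only [upN]; split
      · trivial
      · exact lfree_rename _ (hσ _)
  | letrecE n b t ihb iht => intro σ h hσ; exact h.elim

end Core

namespace Core

variable {S : Sig}

theorem trueE_closed : ∀ d, closedUnder d (trueE : Exp S) := by
  intro d i
  rw [S.true_arity] at i; exact i.elim0

theorem trueE_lfree : lfree (trueE : Exp S) := by
  intro i; rw [S.true_arity] at i; exact i.elim0

theorem trueE_value : isValue (trueE : Exp S) := trivial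

theorem subst_trueE (σ : ℕ → Exp S) : subst σ trueE = trueE := by
  simp only [trueE, subst]
  congr 1; funext i
  rw [S.true_arity] at i; exact i.elim0

theorem Omega_closed : ∀ d, closedUnder d (Omega : Exp S) := by
  intro d
  refine ⟨?_, ?_⟩ <;> simp [Omega, closedUnder]

theorem Omega_lfree : lfree (Omega : Exp S) := by
  exact ⟨⟨trivial, trivial⟩, ⟨trivial, trivial⟩⟩

theorem Omega_not_value : ¬ isValue (Omega : Exp S) := by
  simp [Omega, isValue]

theorem subst_Omega (σ : ℕ → Exp S) : subst σ Omega = Omega := by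
  simp [Omega, subst, upN, consSub]

open Classical in
/-- replace non-closed entries of a substitution by `trueE` -/
noncomputable def closSub (σ : ℕ → Exp S) : ℕ → Exp S :=
  fun k => if closed (σ k) then σ k else trueE

theorem closSub_closed (σ : ℕ → Exp S) (k : ℕ) : closed (closSub σ k) := by
  unfold closSub; split
  · assumption
  · exact trueE_closed 0

theorem closSub_lfree (σ : ℕ → Exp S) (h : ∀ k, lfree (σ k)) (k : ℕ) : lfree (closSub σ k) := by
  unfold closSub; split
  · exact h k
  · exact trueE_lfree

theorem subst_closSub : ∀ (e : Exp S) (m : ℕ) (σ : ℕ → Exp S),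
    closedUnder m (subst (upN m σ) e) →
    subst (upN m σ) e = subst (upN m (closSub σ)) e := by
  intro e
  induction e with
  | var k =>
      intro m σ hc
      simp only [subst] at *
      by_cases h : k < m
      · simp [upN, h]
      · simp only [upN, if_neg h] at *
        have : closed (σ (k - m)) :=
          (closedUnder_rename_iff (σ (k-m)) (f := (· + m)) (d := 0) (m := m)
            (fun j => by show (j < 0) ↔ (j + m < m); omega)).mp hc
        rw [show closSub σ (k-m) = σ (k-m) from if_pos this]
  | app u v ihu ihv =>
      intro m σ hc; simp only [subst] at *
      rw [ihu m σ hc.1, ihv m σ hc.2]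
  | lam u ih =>
      intro m σ hc; simp only [subst] at *
      have e1 : subst (upN 1 (upN m σ)) u = subst (upN (1+m) σ) u :=
        subst_ext u (upN_upN 1 m σ)
      have e2 : subst (upN 1 (upN m (closSub σ))) u = subst (upN (1+m) (closSub σ)) u :=
        subst_ext u (upN_upN 1 m (closSub σ))
      rw [e1, e2]
      simp only [closedUnder] at hc
      rw [e1] at hc
      rw [ih (1+m) σ (by rwa [show m + 1 = 1 + m by omega] at hc)]
  | constr T c args ih =>
      intro m σ hc; simp only [subst] at *
      congr 1; funext i; exact ih i m σ (hc i)
  | seqE u v ihu ihv =>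
      intro m σ hc; simp only [subst] at *
      rw [ihu m σ hc.1, ihv m σ hc.2]
  | caseE T e alts ihe ihalts =>
      intro m σ hc; simp only [subst] at *
      refine congrArg₂ _ (ihe m σ hc.1) ?_
      funext c
      simp only [closedUnder] at hc
      have hc2 : closedUnder (m + S.arity T c) (subst (upN (S.arity T c) (upN m σ)) (alts c)) :=
        hc.2 c
      have e1 : subst (upN (S.arity T c) (upN m σ)) (alts c)
          = subst (upN (S.arity T c + m) σ) (alts c) :=
        subst_ext _ (upN_upN _ m σ)
      have e2 : subst (upN (S.arity T c) (upN m (closSub σ))) (alts c)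
          = subst (upN (S.arity T c + m) (closSub σ)) (alts c) :=
        subst_ext _ (upN_upN _ m (closSub σ))
      rw [e1, e2]
      rw [e1] at hc2
      exact ihalts c (S.arity T c + m) σ (by
        have : m + S.arity T c = S.arity T c + m := by omega
        rwa [this] at hc2)
  | letrecE n b t ihb iht =>
      intro m σ hc; simp only [subst] at *
      have key : ∀ (u : Exp S), closedUnder (m + (n+1)) (subst (upN (n+1) (upN m σ)) u) →
          (∀ m' σ', closedUnder m' (subst (upN m' σ') u) →
            subst (upN m' σ') u = subst (upN m' (closSub σ')) u) →
          subst (upN (n+1) (upN m σ)) u = subst (upN (n+1) (upN m (closSub σ))) u := by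
        intro u hcu ihu
        have e1 : subst (upN (n+1) (upN m σ)) u = subst (upN (n+1+m) σ) u :=
          subst_ext _ (upN_upN _ m σ)
        have e2 : subst (upN (n+1) (upN m (closSub σ))) u = subst (upN (n+1+m) (closSub σ)) u :=
          subst_ext _ (upN_upN _ m (closSub σ))
        rw [e1, e2]
        rw [e1] at hcu
        exact ihu (n+1+m) σ (by
          have : m + (n+1) = n+1+m := by omega
          rwa [this] at hcu)
      refine congrArg₂ _ ?_ (key t hc.2 (iht))
      funext i; exact key (b i) (hc.1 i) (ihb i)

theorem subst_closSub₀ (e : Exp S) (σ : ℕ → Exp S) (hc : closed (subst σ e)) :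
    subst σ e = subst (closSub σ) e := by
  have h0 : subst σ e = subst (upN 0 σ) e := subst_ext e (fun k => (upN_zero σ k).symm)
  have h1 : subst (closSub σ) e = subst (upN 0 (closSub σ)) e :=
    subst_ext e (fun k => (upN_zero (closSub σ) k).symm)
  rw [h0, h1]
  exact subst_closSub e 0 σ (by rwa [← h0])

theorem closedUnder_one_subst (e : Exp S) (σ : ℕ → Exp S) (h : closedUnder 1 e) :
    subst σ e = subst (consSub (σ 0)) e :=
  subst_congr_closed e h (fun k hk => by interval_cases k; rfl)

end Core

namespace Core

variable {S : Sig}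

/-! ### Context composition and decomposition -/

/-- replace the hole of the outer context `A` by the context `B` -/
def compA : ACtx S → ACtx S → ACtx S
  | .hole, B => B
  | .appA A t, B => .appA (compA A B) t
  | .seqA A t, B => .seqA (compA A B) t
  | .caseA T A alts, B => .caseA T (compA A B) alts

theorem plugA_compA (A B : ACtx S) (e : Exp S) :
    plugA (compA A B) e = plugA A (plugA B e) := by
  induction A with
  | hole => rfl
  | appA A t ih => simp [compA, plugA, ih]
  | seqA A t ih => simp [compA, plugA, ih]
  | caseA T A alts ih => simp [compA, plugA, ih]

theorem compA_hole (A : ACtx S) : compA A .hole = A := by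
  induction A with
  | hole => rfl
  | appA A t ih => simp [compA, ih]
  | seqA A t ih => simp [compA, ih]
  | caseA T A alts ih => simp [compA, ih]

theorem isValue_plugA {A : ACtx S} {e : Exp S} (h : isValue (plugA A e)) : A = .hole := by
  cases A <;> simp [plugA, isValue] at h ⊢

theorem base_not_value {r r' : Exp S} (h : LccBase r r') : ¬ isValue r := by
  cases h <;> simp [isValue]

theorem value_cases {v : Exp S} (h : isValue v) :
    (∃ u, v = .lam u) ∨ (∃ T c args, v = .constr T c args) := by
  cases v <;> simp [isValue] at h ⊢

/-- if a redex is found inside `A[s]` and `s` is not a value, the redex is inside `s` -/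
theorem plug_decomp : ∀ (A : ACtx S) {s : Exp S} {B : ACtx S} {r r' : Exp S},
    LccBase r r' → plugA A s = plugA B r → ¬ isValue s →
    ∃ A'', s = plugA A'' r ∧ B = compA A A'' := by
  intro A
  induction A with
  | hole =>
      intro s B r r' hb h hv
      exact ⟨B, h, rfl⟩
  | appA A1 t ih =>
      intro s B r r' hb h hv
      cases B with
      | hole =>
          simp only [plugA] at h
          cases hb with
          | nbeta =>
              injection h with h1 h2
              have : A1 = .hole := isValue_plugA (by rw [h1]; trivial)
              subst this
              exact absurd (by rw [show s = Exp.lam _ from h1]; trivial) hv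
          | nseq hval => exact absurd h (by simp)
          | ncase => exact absurd h (by simp)
      | appA B1 t1 =>
          simp only [plugA] at h
          injection h with h1 h2
          obtain ⟨A'', hs, hB⟩ := ih hb h1 hv
          exact ⟨A'', hs, by rw [hB, h2]; rfl⟩
      | seqA B1 t1 => exact absurd h (by simp [plugA])
      | caseA T B1 alts => exact absurd h (by simp [plugA])
  | seqA A1 t ih =>
      intro s B r r' hb h hv
      cases B with
      | hole =>
          simp only [plugA] at h
          cases hb with
          | nbeta => exact absurd h (by simp)
          | nseq hval =>
              injection h with h1 h2
              have : A1 = .hole := isValue_plugA (by rw [h1]; exact hval)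
              subst this
              exact (hv (by rw [show s = plugA .hole s from rfl, h1]; exact hval)).elim
          | ncase => exact absurd h (by simp)
      | seqA B1 t1 =>
          simp only [plugA] at h
          injection h with h1 h2
          obtain ⟨A'', hs, hB⟩ := ih hb h1 hv
          exact ⟨A'', hs, by rw [hB, h2]; rfl⟩
      | appA B1 t1 => exact absurd h (by simp [plugA])
      | caseA T B1 alts => exact absurd h (by simp [plugA])
  | caseA T A1 alts ih =>
      intro s B r r' hb h hv
      cases B with
      | hole =>
          simp only [plugA] at h
          cases hb with
          | nbeta => exact absurd h (by simp)
          | nseq hval => exact absurd h (by simp)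
          | ncase =>
              injection h with h1 h2 h3
              subst h1
              have : A1 = .hole := isValue_plugA (by rw [h2]; trivial)
              subst this
              exact absurd (by rw [show s = Exp.constr _ _ _ from h2]; trivial) hv
      | caseA T' B1 alts' =>
          simp only [plugA] at h
          injection h with h1 h2 h3
          subst h1
          have h3' := eq_of_heq h3
          obtain ⟨A'', hs, hB⟩ := ih hb h2 hv
          exact ⟨A'', hs, by rw [hB, h3']; rfl⟩
      | appA B1 t1 => exact absurd h (by simp [plugA])
      | seqA B1 t1 => exact absurd h (by simp [plugA])

theorem redex_no_inner {r x : Exp S} {A : ACtx S} {r₂ y : Exp S}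
    (hb : LccBase r x) (h : r = plugA A r₂) (hb2 : LccBase r₂ y) : A = .hole := by
  cases hb with
  | nbeta =>
      cases A with
      | hole => rfl
      | appA A1 t1 =>
          simp only [plugA] at h
          injection h with h1 h2
          have : A1 = .hole := isValue_plugA (by rw [← h1]; trivial)
          subst this
          simp only [plugA] at h1
          rw [← h1] at hb2
          cases hb2
      | seqA A1 t1 => exact absurd h (by simp [plugA])
      | caseA T A1 alts => exact absurd h (by simp [plugA])
  | nseq hval =>
      cases A with
      | hole => rfl
      | seqA A1 t1 =>
          simp only [plugA] at h
          injection h with h1 h2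
          have : A1 = .hole := isValue_plugA (by rw [← h1]; exact hval)
          subst this
          simp only [plugA] at h1
          exact absurd (h1 ▸ hval) (base_not_value hb2)
      | appA A1 t1 => exact absurd h (by simp [plugA])
      | caseA T A1 alts => exact absurd h (by simp [plugA])
  | ncase =>
      cases A with
      | hole => rfl
      | caseA T' A1 alts' =>
          simp only [plugA] at h
          injection h with h1 h2 h3
          subst h1
          have : A1 = .hole := isValue_plugA (by rw [← h2]; trivial)
          subst this
          simp only [plugA] at h2
          rw [← h2] at hb2
          cases hb2
      | appA A1 t1 => exact absurd h (by simp [plugA])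
      | seqA A1 t1 => exact absurd h (by simp [plugA])

theorem base_det {r x y : Exp S} (h1 : LccBase r x) (h2 : LccBase r y) : x = y := by
  cases h1 <;> cases h2 <;> rfl

theorem lccStep_det {s t1 t2 : Exp S} (h1 : lccStep s t1) (h2 : lccStep s t2) : t1 = t2 := by
  obtain ⟨A, r, r', hb, hs, ht⟩ := h1
  obtain ⟨B, r2, r2', hb2, hs2, ht2⟩ := h2
  subst hs ht ht2
  obtain ⟨A'', hr, hB⟩ := plug_decomp A hb2 hs2 (base_not_value hb)
  have hA'' : A'' = .hole := redex_no_inner hb hr hb2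
  subst hA''
  simp only [plugA] at hr
  subst hr
  rw [hB, compA_hole]
  rw [base_det hb hb2]

theorem value_irred {v t : Exp S} (hv : isValue v) (h : lccStep v t) : False := by
  obtain ⟨A, r, r', hb, hs, ht⟩ := h
  have : A = .hole := isValue_plugA (by rw [← hs]; exact hv)
  subst this
  rw [hs] at hv
  exact base_not_value hb hv

theorem lccStep_plugA {s s' : Exp S} (A : ACtx S) (h : lccStep s s') :
    lccStep (plugA A s) (plugA A s') := by
  obtain ⟨B, r, r', hb, hs, ht⟩ := h
  exact ⟨compA A B, r, r', hb, by rw [hs, plugA_compA], by rw [ht, plugA_compA]⟩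

theorem rtg_plugA {s s' : Exp S} (A : ACtx S) (h : Relation.ReflTransGen lccStep s s') :
    Relation.ReflTransGen lccStep (plugA A s) (plugA A s') :=
  Relation.ReflTransGen.lift (plugA A) (fun _ _ h => lccStep_plugA A h) _ _ h

end Core

namespace Core

variable {S : Sig}

/-! ### Convergence machinery -/

theorem convTo_iff_step {s s' : Exp S} (h : lccStep s s') (v : Exp S) :
    lccConvTo s v ↔ lccConvTo s' v := by
  constructor
  · rintro ⟨hr, hv⟩
    rcases Relation.ReflTransGen.cases_head hr with heq | ⟨x, hx, hxr⟩
    · subst heq; exact absurd h (fun h => value_irred hv h)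
    · rw [lccStep_det h hx] at *; exact ⟨hxr, hv⟩
  · rintro ⟨hr, hv⟩
    exact ⟨Relation.ReflTransGen.head h hr, hv⟩

theorem convTo_iff_rtg {s s' : Exp S} (h : Relation.ReflTransGen lccStep s s') (v : Exp S) :
    lccConvTo s v ↔ lccConvTo s' v := by
  induction h with
  | refl => rfl
  | tail hr hstep ih => rw [ih, convTo_iff_step hstep]

theorem conv_of_rtg {s s' : Exp S} (h : Relation.ReflTransGen lccStep s s') :
    lccConv s ↔ lccConv s' := by
  unfold lccConv
  exact exists_congr (fun v => convTo_iff_rtg h v)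

theorem Omega_step : lccStep (Omega : Exp S) Omega := by
  refine ⟨.hole, Omega, Omega, ?_, rfl, rfl⟩
  have h2 : subst (consSub (Exp.lam (.app (.var 0) (.var 0)))) (Exp.app (.var 0) (.var 0))
      = (Omega : Exp S) := by
    simp [subst, consSub, Omega]
  have h := @LccBase.nbeta S (.app (.var 0) (.var 0)) (.lam (.app (.var 0) (.var 0)))
  rw [h2] at h
  exact h

theorem rtg_from_Omega {v : Exp S} (h : Relation.ReflTransGen lccStep Omega v) : v = Omega := by
  induction h with
  | refl => rfl
  | tail hr hstep ih =>
      subst ih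
      exact (lccStep_det hstep Omega_step)

theorem Omega_not_conv : ¬ lccConv (Omega : Exp S) := by
  rintro ⟨v, hr, hv⟩
  rw [rtg_from_Omega hr] at hv
  exact Omega_not_value hv

theorem stuck_not_conv {s : Exp S} (hirr : ∀ t, ¬ lccStep s t) (hnv : ¬ isValue s) :
    ¬ lccConv s := by
  rintro ⟨v, hr, hv⟩
  rcases Relation.ReflTransGen.cases_head hr with heq | ⟨x, hx, _⟩
  · subst heq; exact hnv hv
  · exact hirr x hx

/-- context lemma, part 1: if `A[s]` converges then `s` converges -/
theorem conv_plugA_inner' {ps w : Exp S} (hr : Relation.ReflTransGen lccStep ps w)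
    (hw : isValue w) : ∀ A s, ps = plugA A s → ∃ v, lccConvTo s v := by
  induction hr using Relation.ReflTransGen.head_induction_on with
  | refl =>
      intro A s hps
      have hA : A = .hole := isValue_plugA (hps ▸ hw)
      subst hA
      exact ⟨s, Relation.ReflTransGen.refl, by rw [show plugA .hole s = s from rfl] at hps; rw [← hps]; exact hw⟩
  | head hstep htail ih =>
      rename_i a c
      intro A s hps
      by_cases hv : isValue s
      · exact ⟨s, Relation.ReflTransGen.refl, hv⟩
      · obtain ⟨B, r, r', hb, hs, ht⟩ := hstep
        obtain ⟨A'', hr2, hB⟩ := plug_decomp A hb (by rw [← hps]; exact hs) hv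
        have hc : c = plugA A (plugA A'' r') := by
          rw [ht, hB, plugA_compA]
        obtain ⟨v, hv2, hvv⟩ := ih A (plugA A'' r') hc
        refine ⟨v, Relation.ReflTransGen.head ⟨A'', r, r', hb, hr2, rfl⟩ hv2, hvv⟩

theorem conv_plugA_inner {A : ACtx S} {s : Exp S} (h : lccConv (plugA A s)) :
    ∃ v, lccConvTo s v := by
  obtain ⟨w, hr, hw⟩ := h
  exact conv_plugA_inner' hr hw A s rfl

end Core

namespace Core

variable {S : Sig}

/-! ### Preservation of closedness and letrec-freeness -/

theorem closed_plugA : ∀ (A : ACtx S) {d : ℕ} {e : Exp S}, closedUnder d (plugA A e) →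
    closedUnder d e ∧ ∀ e', closedUnder d e' → closedUnder d (plugA A e') := by
  intro A
  induction A with
  | hole => intro d e h; exact ⟨h, fun e' h' => h'⟩
  | appA A t ih =>
      intro d e h
      obtain ⟨h1, h2⟩ := h
      obtain ⟨he, hrep⟩ := ih h1
      exact ⟨he, fun e' h' => ⟨hrep e' h', h2⟩⟩
  | seqA A t ih =>
      intro d e h
      obtain ⟨h1, h2⟩ := h
      obtain ⟨he, hrep⟩ := ih h1
      exact ⟨he, fun e' h' => ⟨hrep e' h', h2⟩⟩
  | caseA T A alts ih =>
      intro d e h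
      obtain ⟨h1, h2⟩ := h
      obtain ⟨he, hrep⟩ := ih h1
      exact ⟨he, fun e' h' => ⟨hrep e' h', h2⟩⟩

theorem lfree_plugA : ∀ (A : ACtx S) {e : Exp S}, lfree (plugA A e) →
    lfree e ∧ ∀ e', lfree e' → lfree (plugA A e') := by
  intro A
  induction A with
  | hole => intro e h; exact ⟨h, fun e' h' => h'⟩
  | appA A t ih =>
      intro e h
      obtain ⟨he, hrep⟩ := ih h.1
      exact ⟨he, fun e' h' => ⟨hrep e' h', h.2⟩⟩
  | seqA A t ih =>
      intro e h
      obtain ⟨he, hrep⟩ := ih h.1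
      exact ⟨he, fun e' h' => ⟨hrep e' h', h.2⟩⟩
  | caseA T A alts ih =>
      intro e h
      obtain ⟨he, hrep⟩ := ih h.1
      exact ⟨he, fun e' h' => ⟨hrep e' h', h.2⟩⟩

theorem base_preserves_closed {r r' : Exp S} (h : LccBase r r') (hc : closed r) : closed r' := by
  cases h with
  | nbeta =>
      obtain ⟨h1, h2⟩ := hc
      refine closedUnder_subst _ h1 (fun k hk => ?_)
      interval_cases k
      exact h2
  | nseq hv => exact hc.2
  | ncase =>
      obtain ⟨h1, h2⟩ := hc
      refine closedUnder_subst _ (h2 _) (fun k hk => ?_)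
      unfold instSub
      rw [dif_pos (by omega : k < S.arity _ _)]
      exact h1 _

theorem base_preserves_lfree {r r' : Exp S} (h : LccBase r r') (hl : lfree r) : lfree r' := by
  cases h with
  | nbeta =>
      refine lfree_subst _ hl.1 (fun k => ?_)
      cases k with
      | zero => exact hl.2
      | succ k => trivial
  | nseq hv => exact hl.2
  | ncase =>
      refine lfree_subst _ (hl.2 _) (fun k => ?_)
      unfold instSub
      split
      · exact hl.1 _
      · trivial

theorem step_preserves_closed {s t : Exp S} (h : lccStep s t) (hc : closed s) : closed t := by
  obtain ⟨A, r, r', hb, hs, ht⟩ := h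
  subst hs ht
  obtain ⟨hr, hrep⟩ := closed_plugA A hc
  exact hrep _ (base_preserves_closed hb hr)

theorem step_preserves_lfree {s t : Exp S} (h : lccStep s t) (hl : lfree s) : lfree t := by
  obtain ⟨A, r, r', hb, hs, ht⟩ := h
  subst hs ht
  obtain ⟨hr, hrep⟩ := lfree_plugA A hl
  exact hrep _ (base_preserves_lfree hb hr)

theorem rtg_preserves_closed {s t : Exp S} (h : Relation.ReflTransGen lccStep s t)
    (hc : closed s) : closed t := by
  induction h with
  | refl => exact hc
  | tail _ hstep ih => exact step_preserves_closed hstep ih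

theorem rtg_preserves_lfree {s t : Exp S} (h : Relation.ReflTransGen lccStep s t)
    (hl : lfree s) : lfree t := by
  induction h with
  | refl => exact hl
  | tail _ hstep ih => exact step_preserves_lfree hstep ih

end Core

namespace Core

variable {S : Sig}

/-! ### Generic gfp machinery -/

theorem gfpRel_intro {α : Type*} {F : (α → α → Prop) → (α → α → Prop)}
    {η : α → α → Prop} (hpost : ∀ x y, η x y → F η x y) {a b : α} (hab : η a b) :
    gfpRel F a b := ⟨η, hpost, hab⟩

theorem gfpRel_unfold {α : Type*} {F : (α → α → Prop) → (α → α → Prop)}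
    (hmono : ∀ (η μ : α → α → Prop), (∀ x y, η x y → μ x y) → ∀ x y, F η x y → F μ x y)
    {a b : α} (h : gfpRel F a b) : F (gfpRel F) a b := by
  obtain ⟨η, hpost, hab⟩ := h
  exact hmono η (gfpRel F) (fun x y hxy => ⟨η, hpost, hxy⟩) a b (hpost a b hab)

theorem openL_mono {η μ : Exp S → Exp S → Prop} (h : ∀ x y, η x y → μ x y) :
    ∀ s t, openL η s t → openL μ s t := by
  intro s t ho σ hσ hcs hct
  exact h _ _ (ho σ hσ hcs hct)

theorem Flcc_mono : ∀ (η μ : Exp S → Exp S → Prop), (∀ x y, η x y → μ x y) →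
    ∀ x y, Flcc η x y → Flcc μ x y := by
  intro η μ h x y hF
  constructor
  · intro s' hs'
    rcases hF.1 s' hs' with ⟨t', ht', ho⟩ | hbot
    · exact Or.inl ⟨t', ht', openL_mono h _ _ ho⟩
    · exact Or.inr hbot
  · intro T c args hargs
    obtain ⟨targs, ht, hall⟩ := hF.2 T c args hargs
    exact ⟨targs, ht, fun i => h _ _ (hall i)⟩

theorem FQlcc_mono (𝒬 : Set (Exp S → Exp S)) :
    ∀ (η μ : Exp S → Exp S → Prop), (∀ x y, η x y → μ x y) →
    ∀ x y, FQlcc 𝒬 η x y → FQlcc 𝒬 μ x y := by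
  intro η μ h x y hF v1 hv1
  obtain ⟨v2, hv2, hall⟩ := hF v1 hv1
  exact ⟨v2, hv2, fun f hf => h _ _ (hall f hf)⟩

theorem simLcc_unfold {s t : Exp S} (h : simLcc s t) : Flcc simLcc s t :=
  gfpRel_unfold Flcc_mono h

theorem simQlcc_unfold {𝒬 : Set (Exp S → Exp S)} {s t : Exp S} (h : simQlcc 𝒬 s t) :
    FQlcc 𝒬 (simQlcc 𝒬) s t :=
  gfpRel_unfold (FQlcc_mono 𝒬) h

/-! ### Basic properties of the similarities -/

theorem simLcc_refl (s : Exp S) : simLcc s s := by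
  refine gfpRel_intro (η := Eq) ?_ rfl
  rintro x y rfl
  constructor
  · intro s' hs'
    exact Or.inl ⟨s', hs', fun σ hσ h1 h2 => rfl⟩
  · intro T c args hargs
    exact ⟨args, hargs, fun i => rfl⟩

theorem simLcc_bot {s t : Exp S} (h : ¬ lccConv s) : simLcc s t := by
  refine gfpRel_intro (η := fun x _ => ¬ lccConv x) ?_ h
  intro x y hx
  constructor
  · intro s' hs'; exact absurd ⟨_, hs'⟩ hx
  · intro T c args hargs; exact absurd ⟨_, hargs⟩ hx

theorem simLcc_convIff {a b a' b' : Exp S}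
    (ha : ∀ v, lccConvTo a v ↔ lccConvTo a' v)
    (hb : ∀ v, lccConvTo b v ↔ lccConvTo b' v)
    (h : simLcc a' b') : simLcc a b := by
  refine gfpRel_intro
    (η := fun x y => ∃ x' y', (∀ v, lccConvTo x v ↔ lccConvTo x' v) ∧
      (∀ v, lccConvTo y v ↔ lccConvTo y' v) ∧ simLcc x' y') ?_ ⟨a', b', ha, hb, h⟩
  rintro x y ⟨x', y', hx, hy, hsim⟩
  have hF := simLcc_unfold hsim
  constructor
  · intro s' hs'
    rcases hF.1 s' ((hx _).mp hs') with ⟨t', ht', ho⟩ | ⟨T, c, targs, ht, hbot⟩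
    · refine Or.inl ⟨t', (hy _).mpr ht', openL_mono ?_ _ _ ho⟩
      intro u v huv
      exact ⟨u, v, fun _ => Iff.rfl, fun _ => Iff.rfl, huv⟩
    · exact Or.inr ⟨T, c, targs, (hy _).mpr ht, hbot⟩
  · intro T c args hargs
    obtain ⟨targs, ht, hall⟩ := hF.2 T c args ((hx _).mp hargs)
    exact ⟨targs, (hy _).mpr ht, fun i =>
      ⟨args i, targs i, fun _ => Iff.rfl, fun _ => Iff.rfl, hall i⟩⟩

theorem simQlcc_convIff {𝒬 : Set (Exp S → Exp S)} {a b a' b' : Exp S}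
    (ha : ∀ v, lccConvTo a v ↔ lccConvTo a' v)
    (hb : ∀ v, lccConvTo b v ↔ lccConvTo b' v)
    (h : simQlcc 𝒬 a' b') : simQlcc 𝒬 a b := by
  refine gfpRel_intro
    (η := fun x y => ∃ x' y', (∀ v, lccConvTo x v ↔ lccConvTo x' v) ∧
      (∀ v, lccConvTo y v ↔ lccConvTo y' v) ∧ simQlcc 𝒬 x' y') ?_ ⟨a', b', ha, hb, h⟩
  rintro x y ⟨x', y', hx, hy, hsim⟩
  intro v1 hv1
  obtain ⟨v2, hv2, hall⟩ := simQlcc_unfold hsim v1 ((hx _).mp hv1)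
  exact ⟨v2, (hy _).mpr hv2, fun f hf =>
    ⟨f v1, f v2, fun _ => Iff.rfl, fun _ => Iff.rfl, hall f hf⟩⟩

theorem simLcc_of_steps {a b a' b' : Exp S}
    (ha : Relation.ReflTransGen lccStep a a') (hb : Relation.ReflTransGen lccStep b b')
    (h : simLcc a' b') : simLcc a b :=
  simLcc_convIff (convTo_iff_rtg ha) (convTo_iff_rtg hb) h

theorem simQlcc_of_steps {𝒬 : Set (Exp S → Exp S)} {a b a' b' : Exp S}
    (ha : Relation.ReflTransGen lccStep a a') (hb : Relation.ReflTransGen lccStep b b')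
    (h : simQlcc 𝒬 a' b') : simQlcc 𝒬 a b :=
  simQlcc_convIff (convTo_iff_rtg ha) (convTo_iff_rtg hb) h

theorem simQlcc_of_steps' {𝒬 : Set (Exp S → Exp S)} {a b a' b' : Exp S}
    (ha : Relation.ReflTransGen lccStep a a') (hb : Relation.ReflTransGen lccStep b b')
    (h : simQlcc 𝒬 a b) : simQlcc 𝒬 a' b' :=
  simQlcc_convIff (fun v => (convTo_iff_rtg ha v).symm) (fun v => (convTo_iff_rtg hb v).symm) h

end Core

namespace Core

variable {S : Sig}

/-! ### Facts about the test contexts -/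

theorem Q_isA {f : Exp S → Exp S} (hf : f ∈ Qlcc S) : ∃ A : ACtx S, ∀ e, f e = plugA A e := by
  rcases hf with ⟨r, _, _, rfl⟩ | ⟨T, c, i, rfl⟩ | ⟨T, c, rfl⟩
  · exact ⟨.appA .hole r, fun e => rfl⟩
  · exact ⟨.caseA T .hole _, fun e => rfl⟩
  · exact ⟨.caseA T .hole _, fun e => rfl⟩

theorem caseSelCtx_alts_closed (T : S.TyName) (c : S.CName T) (i : Fin (S.arity T c)) :
    ∀ c' : S.CName T, closedUnder (0 + S.arity T c')
      ((letI := S.deceq T; if c' = c then (Exp.var (i : ℕ) : Exp S) else Omega)) := by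
  intro c'
  letI := S.deceq T
  by_cases h : c' = c
  · subst h
    rw [if_pos rfl]
    simp only [closedUnder]
    omega
  · rw [if_neg h]
    exact Omega_closed _

theorem Q_preserves {f : Exp S → Exp S} (hf : f ∈ Qlcc S) {v : Exp S}
    (hc : closed v) (hl : lfree v) : closed (f v) ∧ lfree (f v) := by
  rcases hf with ⟨r, hrl, hrc, rfl⟩ | ⟨T, c, i, rfl⟩ | ⟨T, c, rfl⟩
  · exact ⟨⟨hc, hrc⟩, ⟨hl, hrl⟩⟩
  · refine ⟨⟨hc, caseSelCtx_alts_closed T c i⟩, ⟨hl, fun c' => ?_⟩⟩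
    letI := S.deceq T
    by_cases h : c' = c
    · simp only [caseSelCtx]; rw [if_pos h]; trivial
    · simp only [caseSelCtx]; rw [if_neg h]; exact Omega_lfree
  · refine ⟨⟨hc, fun c' => ?_⟩, ⟨hl, fun c' => ?_⟩⟩ <;>
      letI := S.deceq T <;> by_cases h : c' = c
    · simp only [caseTrueCtx]; rw [if_pos h]; exact trueE_closed _
    · simp only [caseTrueCtx]; rw [if_neg h]; exact Omega_closed _
    · simp only [caseTrueCtx]; rw [if_pos h]; exact trueE_lfree
    · simp only [caseTrueCtx]; rw [if_neg h]; exact Omega_lfree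

/-! ### Stuck expressions -/

theorem app_value_step {w r x : Exp S} (h : lccStep (.app w r) x) (hv : isValue w) :
    ∃ u, w = .lam u := by
  obtain ⟨B, rr, rr', hb, hs, ht⟩ := h
  cases B with
  | hole =>
      simp only [plugA] at hs
      rw [← hs] at hb
      cases hb with
      | nbeta => exact ⟨_, rfl⟩
  | appA B1 t1 =>
      simp only [plugA] at hs
      injection hs with h1 h2
      have : B1 = .hole := isValue_plugA (by rw [← h1]; exact hv)
      subst this
      simp only [plugA] at h1
      rw [h1] at hv
      exact absurd hv (base_not_value hb)
  | seqA B1 t1 => exact absurd hs (by simp [plugA])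
  | caseA T B1 alts => exact absurd hs (by simp [plugA])

theorem case_value_step {T : S.TyName} {w : Exp S} {alts : (c : S.CName T) → Exp S} {x : Exp S}
    (h : lccStep (.caseE T w alts) x) (hv : isValue w) :
    ∃ c args, w = .constr T c args := by
  obtain ⟨B, rr, rr', hb, hs, ht⟩ := h
  cases B with
  | hole =>
      simp only [plugA] at hs
      rw [← hs] at hb
      cases hb with
      | ncase => exact ⟨_, _, rfl⟩
  | caseA T' B1 alts' =>
      simp only [plugA] at hs
      injection hs with h1 h2 h3
      subst h1
      have : B1 = .hole := isValue_plugA (by rw [← h2]; exact hv)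
      subst this
      simp only [plugA] at h2
      rw [h2] at hv
      exact absurd hv (base_not_value hb)
  | appA B1 t1 => exact absurd hs (by simp [plugA])
  | seqA B1 t1 => exact absurd hs (by simp [plugA])

theorem stuck_app {w r : Exp S} (hv : isValue w) (hnl : ∀ u, w ≠ .lam u) :
    ¬ lccConv (.app w r) :=
  stuck_not_conv (fun t h => by obtain ⟨u, hu⟩ := app_value_step h hv; exact hnl u hu)
    (by simp [isValue])

theorem stuck_case {T : S.TyName} {w : Exp S} {alts : (c : S.CName T) → Exp S}
    (hv : isValue w) (hnc : ∀ c args, w ≠ .constr T c args) :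
    ¬ lccConv (.caseE T w alts) :=
  stuck_not_conv (fun t h => by obtain ⟨c, args, hu⟩ := case_value_step h hv; exact hnc c args hu)
    (by simp [isValue])

/-! ### Reductions of the test contexts -/

theorem step_beta (u t : Exp S) : lccStep (.app (.lam u) t) (subst (consSub t) u) :=
  ⟨.hole, _, _, LccBase.nbeta, rfl, rfl⟩

theorem step_case {T : S.TyName} {c : S.CName T} (args : Fin (S.arity T c) → Exp S)
    (alts : (c : S.CName T) → Exp S) :
    lccStep (.caseE T (.constr T c args) alts) (subst (instSub args) (alts c)) :=
  ⟨.hole, _, _, LccBase.ncase, rfl, rfl⟩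

theorem step_caseSel_hit {T : S.TyName} {c : S.CName T} (i : Fin (S.arity T c))
    (args : Fin (S.arity T c) → Exp S) :
    lccStep (caseSelCtx T c i (.constr T c args)) (args i) := by
  have h := step_case (T := T) (c := c) args
    (alts := fun c' => letI := S.deceq T; if c' = c then (.var (i : ℕ)) else Omega)
  have e1 : (letI := S.deceq T; if c = c then (Exp.var (i : ℕ) : Exp S) else Omega)
      = .var (i : ℕ) := by rw [if_pos rfl]
  rw [e1] at h
  have e2 : subst (instSub args) (.var (i : ℕ)) = args i := by
    simp only [subst, instSub]
    rw [dif_pos i.isLt]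
  rwa [e2] at h

theorem step_caseSel_miss {T : S.TyName} {c c' : S.CName T} (i : Fin (S.arity T c))
    (hne : c' ≠ c) (args : Fin (S.arity T c') → Exp S) :
    lccStep (caseSelCtx T c i (.constr T c' args)) Omega := by
  have h := step_case (T := T) (c := c') args
    (alts := fun c'' => letI := S.deceq T; if c'' = c then (.var (i : ℕ)) else Omega)
  have e1 : (letI := S.deceq T; if c' = c then (Exp.var (i : ℕ) : Exp S) else Omega)
      = Omega := by rw [if_neg hne]
  rw [e1, subst_Omega] at h
  exact h

theorem step_caseTrue_hit {T : S.TyName} {c : S.CName T} (args : Fin (S.arity T c) → Exp S) :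
    lccStep (caseTrueCtx T c (.constr T c args)) trueE := by
  have h := step_case (T := T) (c := c) args
    (alts := fun c' => letI := S.deceq T; if c' = c then trueE else Omega)
  have e1 : (letI := S.deceq T; if c = c then (trueE : Exp S) else Omega) = trueE := by
    rw [if_pos rfl]
  rw [e1, subst_trueE] at h
  exact h

theorem step_caseTrue_miss {T : S.TyName} {c c' : S.CName T} (hne : c' ≠ c)
    (args : Fin (S.arity T c') → Exp S) :
    lccStep (caseTrueCtx T c (.constr T c' args)) Omega := by
  have h := step_case (T := T) (c := c') args
    (alts := fun c'' => letI := S.deceq T; if c'' = c then trueE else Omega)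
  have e1 : (letI := S.deceq T; if c' = c then (trueE : Exp S) else Omega) = Omega := by
    rw [if_neg hne]
  rw [e1, subst_Omega] at h
  exact h

/-! ### `applyAll` -/

theorem applyAll_append (l : List (Exp S → Exp S)) (f : Exp S → Exp S) (s : Exp S) :
    applyAll (l ++ [f]) s = applyAll l (f s) := by
  simp [applyAll, List.foldr_append]

theorem applyAll_isA {l : List (Exp S → Exp S)} (hl : ∀ f ∈ l, f ∈ Qlcc S) :
    ∃ A : ACtx S, ∀ e, applyAll l e = plugA A e := by
  induction l with
  | nil => exact ⟨.hole, fun e => rfl⟩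
  | cons f l ih =>
      obtain ⟨A, hA⟩ := ih (fun g hg => hl g (List.mem_cons_of_mem f hg))
      obtain ⟨Af, hAf⟩ := Q_isA (hl f (List.mem_cons_self))
      refine ⟨compA Af A, fun e => ?_⟩
      rw [show applyAll (f :: l) e = f (applyAll l e) from rfl, hA, hAf, plugA_compA]

theorem applyAll_rtg {l : List (Exp S → Exp S)} (hl : ∀ f ∈ l, f ∈ Qlcc S)
    {s s' : Exp S} (h : Relation.ReflTransGen lccStep s s') :
    Relation.ReflTransGen lccStep (applyAll l s) (applyAll l s') := by
  obtain ⟨A, hA⟩ := applyAll_isA hl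
  rw [hA, hA]
  exact rtg_plugA A h

theorem Q_rtg {f : Exp S → Exp S} (hf : f ∈ Qlcc S) {s s' : Exp S}
    (h : Relation.ReflTransGen lccStep s s') :
    Relation.ReflTransGen lccStep (f s) (f s') := by
  obtain ⟨A, hA⟩ := Q_isA hf
  rw [hA, hA]
  exact rtg_plugA A h

end Core

namespace Core

variable {S : Sig}

/-! ### `Q`-similarity coincides with the inductive `Q`-preorder -/

theorem simQ_to_leQ_aux (l : List (Exp S → Exp S)) :
    (∀ f ∈ l, f ∈ Qlcc S) → ∀ s t : Exp S, closed s → lfree s → closed t → lfree t →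
    simQlcc (Qlcc S) s t → lccConv (applyAll l s) → lccConv (applyAll l t) := by
  induction l using List.reverseRecOn with
  | nil =>
      intro _ s t _ _ _ _ hsim hconv
      obtain ⟨v1, hv1⟩ := hconv
      obtain ⟨v2, hv2, _⟩ := simQlcc_unfold hsim v1 hv1
      exact ⟨v2, hv2⟩
  | append_singleton l f ih =>
      intro hl s t hcs hls hct hlt hsim hconv
      have hlQ : ∀ g ∈ l, g ∈ Qlcc S := fun g hg => hl g (by simp [hg])
      have hfQ : f ∈ Qlcc S := hl f (by simp)
      rw [applyAll_append] at hconv ⊢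
      obtain ⟨Al, hAl⟩ := applyAll_isA hlQ
      obtain ⟨Af, hAf⟩ := Q_isA hfQ
      have hconv' : lccConv (plugA (compA Al Af) s) := by
        rw [plugA_compA, ← hAf, ← hAl]; exact hconv
      obtain ⟨v1, hv1⟩ := conv_plugA_inner hconv'
      obtain ⟨v2, hv2, hall⟩ := simQlcc_unfold hsim v1 hv1
      have hconv1 : lccConv (applyAll l (f v1)) :=
        (conv_of_rtg (applyAll_rtg hlQ (Q_rtg hfQ hv1.1))).mp hconv
      have hcv1 := rtg_preserves_closed hv1.1 hcs
      have hlv1 := rtg_preserves_lfree hv1.1 hls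
      have hcv2 := rtg_preserves_closed hv2.1 hct
      have hlv2 := rtg_preserves_lfree hv2.1 hlt
      obtain ⟨hc1, hl1⟩ := Q_preserves hfQ hcv1 hlv1
      obtain ⟨hc2, hl2⟩ := Q_preserves hfQ hcv2 hlv2
      have hconv2 := ih hlQ (f v1) (f v2) hc1 hl1 hc2 hl2 (hall f hfQ) hconv1
      exact (conv_of_rtg (applyAll_rtg hlQ (Q_rtg hfQ hv2.1))).mpr hconv2

theorem simQ_to_leQ {s t : Exp S} (hcs : closed s) (hls : lfree s) (hct : closed t)
    (hlt : lfree t) (h : simQlcc (Qlcc S) s t) : leQlcc (Qlcc S) s t :=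
  fun l hl => simQ_to_leQ_aux l hl s t hcs hls hct hlt h

theorem leQ_to_simQ {s t : Exp S} (hcs : closed s) (hls : lfree s) (hct : closed t)
    (hlt : lfree t) (h : leQlcc (Qlcc S) s t) : simQlcc (Qlcc S) s t := by
  refine gfpRel_intro
    (η := fun x y => closed x ∧ lfree x ∧ closed y ∧ lfree y ∧ leQlcc (Qlcc S) x y)
    ?_ ⟨hcs, hls, hct, hlt, h⟩
  rintro x y ⟨hcx, hlx, hcy, hly, hle⟩
  intro v1 hv1
  obtain ⟨v2, hv2⟩ := hle [] (by simp) ⟨v1, hv1⟩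
  have hcv1 := rtg_preserves_closed hv1.1 hcx
  have hlv1 := rtg_preserves_lfree hv1.1 hlx
  have hcv2 := rtg_preserves_closed hv2.1 hcy
  have hlv2 := rtg_preserves_lfree hv2.1 hly
  refine ⟨v2, hv2, fun f hf => ?_⟩
  obtain ⟨hc1, hl1⟩ := Q_preserves hf hcv1 hlv1
  obtain ⟨hc2, hl2⟩ := Q_preserves hf hcv2 hlv2
  refine ⟨hc1, hl1, hc2, hl2, fun l hl hconv => ?_⟩
  -- conv (applyAll l (f v1)) → conv (applyAll l (f v2))
  have h1 : lccConv (applyAll (l ++ [f]) x) := by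
    rw [applyAll_append]
    exact (conv_of_rtg (applyAll_rtg hl (Q_rtg hf hv1.1))).mpr hconv
  have h2 : lccConv (applyAll (l ++ [f]) y) := by
    refine hle (l ++ [f]) ?_ h1
    intro g hg
    rcases List.mem_append.mp hg with hg | hg
    · exact hl g hg
    · rw [List.mem_singleton.mp hg]; exact hf
  rw [applyAll_append] at h2
  exact (conv_of_rtg (applyAll_rtg hl (Q_rtg hf hv2.1))).mp h2

end Core

namespace Core

variable {S : Sig}

/-! ### `Q`-similarity implies applicative similarity (on closed lfree expressions) -/

theorem simQ_to_simLcc {s t : Exp S} (hcs : closed s) (hls : lfree s) (hct : closed t)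
    (hlt : lfree t) (h : simQlcc (Qlcc S) s t) : simLcc s t := by
  refine gfpRel_intro
    (η := fun x y => closed x ∧ lfree x ∧ closed y ∧ lfree y ∧ simQlcc (Qlcc S) x y)
    ?_ ⟨hcs, hls, hct, hlt, h⟩
  rintro x y ⟨hcx, hlx, hcy, hly, hsim⟩
  constructor
  · -- clause (i): x converges to an abstraction
    intro s' hs'
    obtain ⟨v2, hv2, hall⟩ := simQlcc_unfold hsim _ hs'
    have hclam : closedUnder 1 s' := rtg_preserves_closed hs'.1 hcx
    have hllam : lfree s' := show lfree (Exp.lam s') from rtg_preserves_lfree hs'.1 hlx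
    rcases value_cases hv2.2 with ⟨t', rfl⟩ | ⟨T, c, targs, rfl⟩
    · -- y converges to an abstraction as well
      left
      have hclam' : closedUnder 1 t' := rtg_preserves_closed hv2.1 hcy
      have hllam' : lfree t' := show lfree (Exp.lam t') from rtg_preserves_lfree hv2.1 hly
      refine ⟨t', hv2, fun σ hσ hcs' hct' => ?_⟩
      have e1 : subst σ s' = subst (consSub (closSub σ 0)) s' := by
        rw [subst_closSub₀ s' σ hcs']
        exact closedUnder_one_subst s' (closSub σ) hclam
      have e2 : subst σ t' = subst (consSub (closSub σ 0)) t' := by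
        rw [subst_closSub₀ t' σ hct']
        exact closedUnder_one_subst t' (closSub σ) hclam'
      have hrC : closed (closSub σ 0) := closSub_closed σ 0
      have hrL : lfree (closSub σ 0) := closSub_lfree σ hσ 0
      have hfQ : (fun e => Exp.app e (closSub σ 0)) ∈ Qlcc S :=
        Or.inl ⟨closSub σ 0, hrL, hrC, rfl⟩
      have hq := hall _ hfQ
      have hq' := simQlcc_of_steps'
        (Relation.ReflTransGen.single (step_beta s' (closSub σ 0)))
        (Relation.ReflTransGen.single (step_beta t' (closSub σ 0))) hq
      exact ⟨hcs', lfree_subst s' hllam hσ, hct', lfree_subst t' hllam' hσ,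
        by rw [e1, e2]; exact hq'⟩
    · -- y converges to a constructor application: then s' is in cBot
      right
      refine ⟨T, c, targs, hv2, fun σ hσ hcs' hconv => ?_⟩
      have e1 : subst σ s' = subst (consSub (closSub σ 0)) s' := by
        rw [subst_closSub₀ s' σ hcs']
        exact closedUnder_one_subst s' (closSub σ) hclam
      have hrC : closed (closSub σ 0) := closSub_closed σ 0
      have hrL : lfree (closSub σ 0) := closSub_lfree σ hσ 0
      have hfQ : (fun e => Exp.app e (closSub σ 0)) ∈ Qlcc S :=
        Or.inl ⟨closSub σ 0, hrL, hrC, rfl⟩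
      have hq := hall _ hfQ
      -- the left side converges, hence the right side must, but it is stuck
      have hconv1 : lccConv (Exp.app (.lam s') (closSub σ 0)) := by
        rw [conv_of_rtg (Relation.ReflTransGen.single (step_beta s' (closSub σ 0)))]
        rw [← e1]
        exact hconv
      obtain ⟨v1, hv1⟩ := hconv1
      obtain ⟨v2', hv2', _⟩ := simQlcc_unfold hq v1 hv1
      exact stuck_app (w := Exp.constr T c targs) trivial (fun u h => by cases h)
        ⟨v2', hv2'⟩
  · -- clause (ii): x converges to a constructor application
    intro T c args hargs
    obtain ⟨v2, hv2, hall⟩ := simQlcc_unfold hsim _ hargs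
    have hccon : closed (Exp.constr T c args) := rtg_preserves_closed hargs.1 hcx
    have hlcon : lfree (Exp.constr T c args) := rtg_preserves_lfree hargs.1 hlx
    have hfT : caseTrueCtx T c ∈ Qlcc S := Or.inr (Or.inr ⟨T, c, rfl⟩)
    have hqT := hall _ hfT
    have hconvT : lccConvTo (caseTrueCtx T c (.constr T c args)) trueE :=
      ⟨Relation.ReflTransGen.single (step_caseTrue_hit args), trueE_value⟩
    obtain ⟨w2, hw2, _⟩ := simQlcc_unfold hqT _ hconvT
    rcases value_cases hv2.2 with ⟨t', rfl⟩ | ⟨T', c', targs, rfl⟩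
    · exact absurd ⟨w2, hw2⟩
        (stuck_case (T := T) (w := .lam t') trivial (fun c args h => by cases h))
    · have hT : T' = T := by
        by_contra hT
        exact stuck_case (T := T) (w := .constr T' c' targs) trivial
          (fun c'' args'' heq => by injection heq with h1 _ _; exact hT h1) ⟨w2, hw2⟩
      subst hT
      have hc' : c' = c := by
        by_contra hc'
        have hdiv : ¬ lccConv (caseTrueCtx T' c (.constr T' c' targs)) := by
          rw [conv_of_rtg (Relation.ReflTransGen.single (step_caseTrue_miss hc' targs))]
          exact Omega_not_conv
        exact hdiv ⟨w2, hw2⟩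
      subst hc'
      refine ⟨targs, hv2, fun i => ?_⟩
      have hccon' : closed (Exp.constr T' c' targs) := rtg_preserves_closed hv2.1 hcy
      have hlcon' : lfree (Exp.constr T' c' targs) := rtg_preserves_lfree hv2.1 hly
      have hfS : caseSelCtx T' c' i ∈ Qlcc S := Or.inr (Or.inl ⟨T', c', i, rfl⟩)
      have hq := hall _ hfS
      have hq' := simQlcc_of_steps'
        (Relation.ReflTransGen.single (step_caseSel_hit i args))
        (Relation.ReflTransGen.single (step_caseSel_hit i targs)) hq
      exact ⟨hccon i, hlcon i, hccon' i, hlcon' i, hq'⟩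

end Core

namespace Core

variable {S : Sig}

theorem consSub_lfree {r : Exp S} (h : lfree r) : ∀ k, lfree (consSub r k) := by
  intro k; cases k with
  | zero => exact h
  | succ k => trivial

theorem consSub_closed_subst {u r : Exp S} (hu : closedUnder 1 u) (hr : closed r) :
    closed (subst (consSub r) u) := by
  refine closedUnder_subst u hu (fun k hk => ?_)
  interval_cases k
  exact hr

theorem lfree_consSub_subst {u r : Exp S} (hu : lfree u) (hr : lfree r) :
    lfree (subst (consSub r) u) :=
  lfree_subst u hu (consSub_lfree hr)

/-! ### Applicative similarity implies `Q`-similarity (on closed lfree expressions) -/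

theorem simLcc_to_simQ {s t : Exp S} (hcs : closed s) (hls : lfree s) (hct : closed t)
    (hlt : lfree t) (h : simLcc s t) : simQlcc (Qlcc S) s t := by
  refine gfpRel_intro
    (η := fun x y => closed x ∧ lfree x ∧ closed y ∧ lfree y ∧ simLcc x y)
    ?_ ⟨hcs, hls, hct, hlt, h⟩
  rintro x y ⟨hcx, hlx, hcy, hly, hsim⟩
  intro v1 hv1
  have hF := simLcc_unfold hsim
  have hcv1 := rtg_preserves_closed hv1.1 hcx
  have hlv1 := rtg_preserves_lfree hv1.1 hlx
  rcases value_cases hv1.2 with ⟨s', rfl⟩ | ⟨T, c, args, rfl⟩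
  · -- v1 = λ s'
    have hcs' : closedUnder 1 s' := hcv1
    have hls' : lfree s' := hlv1
    rcases hF.1 s' hv1 with ⟨t', ht', ho⟩ | ⟨T, c, targs, ht, hbot⟩
    · -- t also converges to an abstraction
      have hcv2 := rtg_preserves_closed ht'.1 hcy
      have hlv2 := rtg_preserves_lfree ht'.1 hly
      have hct' : closedUnder 1 t' := hcv2
      have hlt' : lfree t' := show lfree (Exp.lam t') from rtg_preserves_lfree ht'.1 hly
      refine ⟨.lam t', ht', fun f hf => ?_⟩
      obtain ⟨hcf1, hlf1⟩ := Q_preserves hf hcv1 hlv1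
      obtain ⟨hcf2, hlf2⟩ := Q_preserves hf hcv2 hlt'
      refine ⟨hcf1, hlf1, hcf2, hlf2, ?_⟩
      rcases hf with ⟨r, hrl, hrc, rfl⟩ | ⟨T0, c0, i0, rfl⟩ | ⟨T0, c0, rfl⟩
      · -- application context
        have hsub := ho (consSub r) (consSub_lfree hrl)
          (consSub_closed_subst hcs' hrc) (consSub_closed_subst hct' hrc)
        exact simLcc_of_steps (Relation.ReflTransGen.single (step_beta s' r))
          (Relation.ReflTransGen.single (step_beta t' r)) hsub
      · exact simLcc_bot (stuck_case trivial (fun c args h => by cases h))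
      · exact simLcc_bot (stuck_case trivial (fun c args h => by cases h))
    · -- t converges to a constructor application, s' diverges under all instances
      have hcv2 := rtg_preserves_closed ht.1 hcy
      have hlv2 := rtg_preserves_lfree ht.1 hly
      refine ⟨.constr T c targs, ht, fun f hf => ?_⟩
      obtain ⟨hcf1, hlf1⟩ := Q_preserves hf hcv1 hlv1
      obtain ⟨hcf2, hlf2⟩ := Q_preserves hf hcv2 hlv2
      refine ⟨hcf1, hlf1, hcf2, hlf2, ?_⟩
      rcases hf with ⟨r, hrl, hrc, rfl⟩ | ⟨T0, c0, i0, rfl⟩ | ⟨T0, c0, rfl⟩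
      · refine simLcc_bot ?_
        rw [conv_of_rtg (Relation.ReflTransGen.single (step_beta s' r))]
        exact hbot (consSub r) (consSub_lfree hrl) (consSub_closed_subst hcs' hrc)
      · exact simLcc_bot (stuck_case trivial (fun c args h => by cases h))
      · exact simLcc_bot (stuck_case trivial (fun c args h => by cases h))
  · -- v1 = constructor application
    obtain ⟨targs, ht, hall⟩ := hF.2 T c args hv1
    have hcv2 := rtg_preserves_closed ht.1 hcy
    have hlv2 := rtg_preserves_lfree ht.1 hly
    refine ⟨.constr T c targs, ht, fun f hf => ?_⟩
    obtain ⟨hcf1, hlf1⟩ := Q_preserves hf hcv1 hlv1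
    obtain ⟨hcf2, hlf2⟩ := Q_preserves hf hcv2 hlv2
    refine ⟨hcf1, hlf1, hcf2, hlf2, ?_⟩
    rcases hf with ⟨r, hrl, hrc, rfl⟩ | ⟨T0, c0, i0, rfl⟩ | ⟨T0, c0, rfl⟩
    · exact simLcc_bot (stuck_app trivial (fun u h => by cases h))
    · -- selector case context
      by_cases hT : T = T0
      · subst hT
        by_cases hc0 : c = c0
        · subst hc0
          exact simLcc_of_steps
            (Relation.ReflTransGen.single (step_caseSel_hit i0 args))
            (Relation.ReflTransGen.single (step_caseSel_hit i0 targs))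
            (hall i0)
        · refine simLcc_bot ?_
          rw [conv_of_rtg (Relation.ReflTransGen.single (step_caseSel_miss i0 hc0 args))]
          exact Omega_not_conv
      · refine simLcc_bot (stuck_case trivial (fun c'' args'' heq => ?_))
        injection heq with h1 _ _
        exact hT h1
    · -- `True` case context
      by_cases hT : T = T0
      · subst hT
        by_cases hc0 : c = c0
        · subst hc0
          exact simLcc_of_steps
            (Relation.ReflTransGen.single (step_caseTrue_hit args))
            (Relation.ReflTransGen.single (step_caseTrue_hit targs))
            (simLcc_refl trueE)
        · refine simLcc_bot ?_
          rw [conv_of_rtg (Relation.ReflTransGen.single (step_caseTrue_miss hc0 args))]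
          exact Omega_not_conv
      · refine simLcc_bot (stuck_case trivial (fun c'' args'' heq => ?_))
        injection heq with h1 _ _
        exact hT h1

end Core

namespace Core

/-- In `L_lcc`, applicative similarity, `Q_lcc`-similarity and the
inductive `Q_lcc`-preorder all coincide on closed expressions, and their open
extensions coincide as well. -/
theorem lcc_Q_similarity_coincide (S : Sig) :
    (∀ s t : Exp S, lfree s → lfree t → closed s → closed t →
      ((simLcc s t ↔ simQlcc (Qlcc S) s t) ∧
       (simQlcc (Qlcc S) s t ↔ leQlcc (Qlcc S) s t))) ∧
    (∀ s t : Exp S, lfree s → lfree t →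
      ((openL simLcc s t ↔ openL (simQlcc (Qlcc S)) s t) ∧
       (openL (simQlcc (Qlcc S)) s t ↔ openL (leQlcc (Qlcc S)) s t))) := by
  have main : ∀ s t : Exp S, lfree s → lfree t → closed s → closed t →
      ((simLcc s t ↔ simQlcc (Qlcc S) s t) ∧
       (simQlcc (Qlcc S) s t ↔ leQlcc (Qlcc S) s t)) := by
    intro s t hls hlt hcs hct
    exact ⟨⟨fun h => simLcc_to_simQ hcs hls hct hlt h,
            fun h => simQ_to_simLcc hcs hls hct hlt h⟩,
           ⟨fun h => simQ_to_leQ hcs hls hct hlt h,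
            fun h => leQ_to_simQ hcs hls hct hlt h⟩⟩
  refine ⟨main, fun s t hls hlt => ⟨⟨?_, ?_⟩, ⟨?_, ?_⟩⟩⟩ <;> intro h σ hσ h1 h2
  · exact ((main _ _ (lfree_subst s hls hσ) (lfree_subst t hlt hσ) h1 h2).1).mp (h σ hσ h1 h2)
  · exact ((main _ _ (lfree_subst s hls hσ) (lfree_subst t hlt hσ) h1 h2).1).mpr (h σ hσ h1 h2)
  · exact ((main _ _ (lfree_subst s hls hσ) (lfree_subst t hlt hσ) h1 h2).2).mp (h σ hσ h1 h2)
  · exact ((main _ _ (lfree_subst s hls hσ) (lfree_subst t hlt hσ) h1 h2).2).mpr (h σ hσ h1 h2)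

end Core
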